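/- arXiv:1204.6159 — 8 statements merged into one kernel-verified Lean document; each statement's English description precedes it below -/
import Mathlib

section
/- Let 0 < β < α < 1. Then for all x, y ∈ (0,∞) one has x^{-α} y^{1-α} + x^{-β} y^{1-β} + y ≤ c(α,β) · (x^{-α} y^{1-α} + y), where c(α,β) = 1 + (β/α)^{β/α} · (1 - β/α)^{1 - β/α}. -/
open Real

/-- Numerical inequality (Lemma 5.3): for `0 < β < α < 1` and all
`x, y ∈ (0,∞)`,
`x^{-α} y^{1-α} + x^{-β} y^{1-β} + y ≤ c(α,β) (x^{-α} y^{1-α} + y)` with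
`c(α,β) = 1 + (β/α)^{β/α} (1 - β/α)^{1-β/α}`. -/
theorem stmt_0 (α β : ℝ) (hβ : 0 < β) (hβα : β < α) (hα : α < 1) :
    ∀ x y : ℝ, 0 < x → 0 < y →
      x ^ (-α) * y ^ (1 - α) + x ^ (-β) * y ^ (1 - β) + y ≤
        (1 + (β / α) ^ (β / α) * (1 - β / α) ^ (1 - β / α)) *
          (x ^ (-α) * y ^ (1 - α) + y) := by
  intro x y hx hy
  have hα0 : 0 < α := hβ.trans hβα
  set θ : ℝ := β / α with hθdef
  have hθ0 : 0 < θ := div_pos hβ hα0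
  have hθ1 : θ < 1 := (div_lt_one hα0).mpr hβα
  have hxy : 0 < x * y := mul_pos hx hy
  set u : ℝ := (x * y) ^ (-α) with hudef
  have hu : 0 < u := rpow_pos_of_pos hxy _
  -- identity: x^{-s} y^{1-s} = y * (x*y)^{-s}
  have hid : ∀ s : ℝ, x ^ (-s) * y ^ (1 - s) = y * (x * y) ^ (-s) := by
    intro s
    rw [mul_rpow hx.le hy.le, show (1 : ℝ) - s = 1 + (-s) by ring, rpow_add hy, rpow_one]
    ring
  -- u^θ = (x*y)^(-β)
  have huθ : u ^ θ = (x * y) ^ (-β) := by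
    rw [hudef, ← Real.rpow_mul hxy.le]
    congr 1
    rw [hθdef]
    field_simp
  -- key inequality via weighted AM-GM
  have key : u ^ θ ≤ θ ^ θ * (1 - θ) ^ (1 - θ) * (u + 1) := by
    have h := Real.geom_mean_le_arith_mean2_weighted (w₁ := θ) (w₂ := 1 - θ)
      (p₁ := u / θ) (p₂ := 1 / (1 - θ)) hθ0.le (by linarith)
      (le_of_lt (div_pos hu hθ0)) (le_of_lt (one_div_pos.mpr (by linarith))) (by ring)
    have e1 : θ ^ θ * (u / θ) ^ θ = u ^ θ := by
      rw [← mul_rpow hθ0.le (div_pos hu hθ0).le, mul_div_cancel₀ _ (ne_of_gt hθ0)]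
    have e2 : (1 - θ) ^ (1 - θ) * (1 / (1 - θ)) ^ (1 - θ) = 1 := by
      rw [← mul_rpow (by linarith) (one_div_pos.mpr (by linarith)).le,
        mul_one_div_cancel (by linarith), one_rpow]
    have e3 : θ * (u / θ) + (1 - θ) * (1 / (1 - θ)) = u + 1 := by
      have : (1 - θ) ≠ 0 := by linarith
      field_simp
    calc u ^ θ = θ ^ θ * (1 - θ) ^ (1 - θ) * ((u / θ) ^ θ * (1 / (1 - θ)) ^ (1 - θ)) := by
          rw [show θ ^ θ * (1 - θ) ^ (1 - θ) * ((u / θ) ^ θ * (1 / (1 - θ)) ^ (1 - θ))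
              = (θ ^ θ * (u / θ) ^ θ) * ((1 - θ) ^ (1 - θ) * (1 / (1 - θ)) ^ (1 - θ)) by ring,
            e1, e2, mul_one]
      _ ≤ θ ^ θ * (1 - θ) ^ (1 - θ) * (u + 1) := by
          rw [← e3]
          exact mul_le_mul_of_nonneg_left h
            (mul_nonneg (rpow_nonneg hθ0.le _) (rpow_nonneg (by linarith) _))
  have hmain : y * u ^ θ ≤ θ ^ θ * (1 - θ) ^ (1 - θ) * (y * (u + 1)) := by
    calc y * u ^ θ ≤ y * (θ ^ θ * (1 - θ) ^ (1 - θ) * (u + 1)) :=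
          mul_le_mul_of_nonneg_left key hy.le
      _ = θ ^ θ * (1 - θ) ^ (1 - θ) * (y * (u + 1)) := by ring
  rw [hid α, hid β, ← huθ]
  nlinarith [hmain]
end

section
/- Let Ω ⊆ ℝ^N be open, let ν and μ be Borel measures on Ω given by densities ρ_ν, ρ_μ : Ω → (0,∞) with respect to Lebesgue measure, and assume 0 < ν(Ω) < ∞. Let M_P > 0 and assume the zero-mean Poincaré inequality on the locally Lipschitz class: for every locally Lipschitz v : Ω → ℝ with ∫_Ω v² dν < ∞ and ∫_Ω ‖∇v‖² dμ < ∞ one has ‖v - v̄‖_{2;ν} ≤ M_P ‖∇v‖_{2;μ} (where ∇v is the almost-everywhere defined gradient). Let r ≥ 1/2 and let Φ : ℝ → ℝ be continuous and strictly increasing with Φ(x)/x^r → l₀ as x → 0, Φ(x)/x^r → l₋ as x → -∞, and Φ(x)/x^r → l₊ as x → +∞, for some constants l₀, l₋, l₊ ∈ (0,∞). Then there exists a constant C_Φ > 0 such that for every ξ ∈ L¹(Ω;ν) with ∫_Ω ξ dν = 0 and such that Φ∘ξ is locally Lipschitz with ∫_Ω (Φ∘ξ)² dν < ∞ and ∫_Ω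 ‖∇(Φ∘ξ)‖² dμ < ∞, one has ‖Φ∘ξ‖_{2;ν} ≤ C_Φ ‖∇(Φ∘ξ)‖_{2;μ}. -/
open MeasureTheory Real Filter Topology

/-- Signed power: `x^q = |x|^q · sign x`. -/
noncomputable def spow (x q : ℝ) : ℝ := Real.sign x * |x| ^ q

/-- Weighted `L^p` norm `‖f‖_{p;ν} = (∫ |f|^p dν)^{1/p}`. -/
noncomputable def wnorm {Ω : Type*} [MeasurableSpace Ω] (ν : Measure Ω) (p : ℝ)
    (f : Ω → ℝ) : ℝ := (∫ x, |f x| ^ p ∂ν) ^ (1 / p)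

/-- Weighted mean value `f̄ = (∫ f dν)/ν(Ω)`. -/
noncomputable def wmean {Ω : Type*} [MeasurableSpace Ω] (ν : Measure Ω)
    (f : Ω → ℝ) : ℝ := (∫ x, f x ∂ν) / (ν Set.univ).toReal

lemma spow_abs (x q : ℝ) (hx : x ≠ 0) : |spow x q| = |x| ^ q := by
  rw [spow, abs_mul, abs_of_nonneg (Real.rpow_nonneg (abs_nonneg x) q)]
  rcases lt_or_gt_of_ne hx with h | h
  · rw [Real.sign_of_neg h]; norm_num
  · rw [Real.sign_of_pos h]; norm_num

lemma spow_ne_zero (x q : ℝ) (hx : x ≠ 0) : spow x q ≠ 0 := by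
  intro h
  have := spow_abs x q hx
  rw [h, abs_zero] at this
  exact (Real.rpow_pos_of_pos (abs_pos.mpr hx) q).ne' this.symm

lemma sandwich (r : ℝ) (hr0 : 0 < r) (Φ : ℝ → ℝ) (hΦc : Continuous Φ)
    (hΦmono : StrictMono Φ) (l₀ lminus lplus : ℝ)
    (hl₀ : 0 < l₀) (hlminus : 0 < lminus) (hlplus : 0 < lplus)
    (hΦ0 : Tendsto (fun x => Φ x / spow x r) (nhdsWithin 0 {(0 : ℝ)}ᶜ) (nhds l₀))
    (hΦbot : Tendsto (fun x => Φ x / spow x r) atBot (nhds lminus))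
    (hΦtop : Tendsto (fun x => Φ x / spow x r) atTop (nhds lplus)) :
    ∃ a b : ℝ, 0 < a ∧ 0 < b ∧ Φ 0 = 0 ∧
      ∀ t : ℝ, a * |t| ^ r ≤ |Φ t| ∧ |Φ t| ≤ b * |t| ^ r := by
  have habs : Continuous fun t : ℝ => |t| ^ r :=
    continuous_abs.rpow_const (fun x => Or.inr hr0.le)
  -- Φ 0 = 0
  have hspow0 : Tendsto (fun x : ℝ => spow x r) (nhds 0) (nhds 0) := by
    have hb : ∀ x : ℝ, ‖spow x r‖ ≤ |x| ^ r := by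
      intro x
      rcases eq_or_ne x 0 with rfl | hx
      · simp [spow, Real.rpow_nonneg]
      · exact (spow_abs x r hx).le
    have ht : Tendsto (fun t : ℝ => |t| ^ r) (nhds 0) (nhds 0) := by
      have := habs.tendsto 0
      simpa [Real.zero_rpow hr0.ne'] using this
    exact squeeze_zero_norm hb ht
  have hΦ00 : Φ 0 = 0 := by
    have h1 : Tendsto Φ (nhdsWithin 0 {(0:ℝ)}ᶜ) (nhds (l₀ * 0)) := by
      have := hΦ0.mul (hspow0.mono_left nhdsWithin_le_nhds)
      apply this.congr'
      filter_upwards [self_mem_nhdsWithin] with x hx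
      exact div_mul_cancel₀ (Φ x) (spow_ne_zero x r hx)
    have h2 : Tendsto Φ (nhdsWithin 0 {(0:ℝ)}ᶜ) (nhds (Φ 0)) :=
      (hΦc.tendsto 0).mono_left nhdsWithin_le_nhds
    simpa using (tendsto_nhds_unique h2 h1)
  -- sign facts
  have hΦne : ∀ t : ℝ, t ≠ 0 → Φ t ≠ 0 := by
    intro t ht
    rcases lt_or_gt_of_ne ht with h | h
    · exact ne_of_lt (by simpa [hΦ00] using hΦmono h)
    · exact ne_of_gt (by simpa [hΦ00] using hΦmono h)
  set g : ℝ → ℝ := fun t => |Φ t| / |t| ^ r with hg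
  have hgeq : ∀ t : ℝ, t ≠ 0 → g t = |Φ t / spow t r| := by
    intro t ht
    rw [abs_div, spow_abs t r ht]
  -- near zero
  obtain ⟨ε, hε, h0⟩ : ∃ ε > 0, ∀ t : ℝ, t ≠ 0 → dist t 0 < ε →
      dist (Φ t / spow t r) l₀ < l₀ / 2 := by
    have := Metric.tendsto_nhds.mp hΦ0 (l₀ / 2) (by positivity)
    rw [eventually_nhdsWithin_iff] at this
    rw [Metric.eventually_nhds_iff] at this
    obtain ⟨ε, hε, h⟩ := this
    exact ⟨ε, hε, fun t ht htd => h htd ht⟩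
  obtain ⟨T, hT⟩ : ∃ T : ℝ, ∀ t ≥ T, dist (Φ t / spow t r) lplus < lplus / 2 :=
    eventually_atTop.mp (Metric.tendsto_nhds.mp hΦtop (lplus / 2) (by positivity))
  obtain ⟨T', hT'⟩ : ∃ T' : ℝ, ∀ t ≤ T', dist (Φ t / spow t r) lminus < lminus / 2 :=
    eventually_atBot.mp (Metric.tendsto_nhds.mp hΦbot (lminus / 2) (by positivity))
  -- generic estimate: dist (f t) l < l/2 → l/2 ≤ g t ≤ 3l/2
  have key : ∀ (t l : ℝ), t ≠ 0 → 0 < l → dist (Φ t / spow t r) l < l / 2 →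
      l / 2 ≤ g t ∧ g t ≤ 3 * l / 2 := by
    intro t l ht hl hd
    rw [Real.dist_eq] at hd
    have h1 := abs_abs_sub_abs_le_abs_sub (Φ t / spow t r) l
    rw [hgeq t ht]
    rw [abs_of_pos hl] at h1
    have h2 := abs_lt.mp (lt_of_le_of_lt h1 hd)
    constructor <;> linarith [h2.1, h2.2]
  -- middle compact set
  set Tp : ℝ := max T 1 with hTp
  set Tm : ℝ := min T' (-1) with hTm
  set ε' : ℝ := min ε 1 with hε'
  have hε'0 : 0 < ε' := lt_min hε one_pos
  set S : Set ℝ := Set.Icc Tm Tp ∩ {t : ℝ | ε' ≤ |t|} with hS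
  have hScomp : IsCompact S :=
    isCompact_Icc.inter_right (isClosed_le continuous_const continuous_abs)
  have hSne : S.Nonempty := by
    refine ⟨1, ⟨⟨?_, le_max_right _ _⟩, ?_⟩⟩
    · exact le_trans (min_le_right _ _) (by norm_num)
    · show ε' ≤ |(1:ℝ)|
      rw [abs_one]
      exact min_le_right ε 1
  have hSne0 : ∀ t ∈ S, t ≠ 0 := by
    intro t ht h0'
    rw [h0'] at ht
    have := ht.2
    simp at this
    linarith [hε'0]
  have hgcont : ContinuousOn g S := by
    apply ContinuousOn.div (hΦc.abs.continuousOn) habs.continuousOn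
    intro t ht
    exact (Real.rpow_pos_of_pos (abs_pos.mpr (hSne0 t ht)) r).ne'
  obtain ⟨t₀, ht₀S, hmin⟩ := hScomp.exists_isMinOn hSne hgcont
  obtain ⟨t₁, ht₁S, hmax⟩ := hScomp.exists_isMaxOn hSne hgcont
  have hgt₀ : 0 < g t₀ :=
    div_pos (abs_pos.mpr (hΦne t₀ (hSne0 t₀ ht₀S)))
      (Real.rpow_pos_of_pos (abs_pos.mpr (hSne0 t₀ ht₀S)) r)
  refine ⟨min (l₀ / 2) (min (lminus / 2) (min (lplus / 2) (g t₀))),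
    max (3 * l₀ / 2) (max (3 * lminus / 2) (max (3 * lplus / 2) (g t₁))), ?_, ?_, hΦ00, ?_⟩
  · positivity
  · positivity
  intro t
  rcases eq_or_ne t 0 with rfl | ht
  · simp [hΦ00, Real.zero_rpow hr0.ne']
  -- show bounds on g t, then multiply
  have hbound : min (l₀ / 2) (min (lminus / 2) (min (lplus / 2) (g t₀))) ≤ g t ∧
      g t ≤ max (3 * l₀ / 2) (max (3 * lminus / 2) (max (3 * lplus / 2) (g t₁))) := by
    rcases lt_or_ge (|t|) ε' with hsmall | hbig
    · have hd : dist t 0 < ε := by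
        rw [Real.dist_eq, sub_zero]
        exact lt_of_lt_of_le hsmall (min_le_left _ _)
      have hk := key t l₀ ht hl₀ (h0 t ht hd)
      exact ⟨le_trans (min_le_left _ _) hk.1, le_trans hk.2 (le_max_left _ _)⟩
    · rcases le_or_gt t Tm with hbot | h1
      · have := key t lminus ht hlminus (hT' t (le_trans hbot (min_le_left _ _)))
        exact ⟨le_trans (le_trans (min_le_right _ _) (min_le_left _ _)) this.1,
          le_trans this.2 (le_trans (le_max_left _ _) (le_max_right _ _))⟩
      · rcases le_or_gt Tp t with htop | h2
        · have := key t lplus ht hlplus (hT t (le_trans (le_max_left _ _) htop))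
          exact ⟨le_trans (le_trans (min_le_right _ _)
              (le_trans (min_le_right _ _) (min_le_left _ _))) this.1,
            le_trans this.2 (le_trans (le_max_left _ _)
              (le_trans (le_max_right _ _) (le_max_right _ _)))⟩
        · have htS : t ∈ S := ⟨⟨h1.le, h2.le⟩, hbig⟩
          exact ⟨le_trans (le_trans (min_le_right _ _)
              (le_trans (min_le_right _ _) (min_le_right _ _))) (hmin htS),
            le_trans (hmax htS) (le_trans (le_max_right _ _)
              (le_trans (le_max_right _ _) (le_max_right _ _)))⟩
  have hpos : (0:ℝ) < |t| ^ r := Real.rpow_pos_of_pos (abs_pos.mpr ht) r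
  obtain ⟨hb1, hb2⟩ := hbound
  simp only [hg] at hb1 hb2
  rw [le_div_iff₀ hpos] at hb1
  rw [div_le_iff₀ hpos] at hb2
  exact ⟨hb1, hb2⟩

set_option maxHeartbeats 2000000 in
lemma core {α : Type*} [MeasurableSpace α] (ν : Measure α) [IsFiniteMeasure ν]
    (q Λ c : ℝ) (hq0 : 0 < q) (hq2 : q ≤ 2) (hΛ : 0 < Λ)
    (v : α → ℝ) (hv : Measurable v)
    (hv2 : Integrable (fun x => (v x) ^ 2) ν)
    (hC1 : ∫ x, max (v x) 0 ^ q ∂ν ≤ Λ * ∫ x, max (-v x) 0 ^ q ∂ν)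
    (hc0 : 0 < c)
    (hmean : ∫ x, v x ∂ν = c * (ν Set.univ).toReal)
    (hm : 0 < (ν Set.univ).toReal) :
    c ^ 2 ≤ (8 / (ν Set.univ).toReal + 2 ^ (q + 1) * Λ / (ν Set.univ).toReal) *
      ∫ x, (v x - c) ^ 2 ∂ν := by
  set m := (ν Set.univ).toReal with hm'
  set D := ∫ x, (v x - c) ^ 2 ∂ν with hD
  have hD0 : 0 ≤ D := integral_nonneg fun x => sq_nonneg _
  -- Integrability of v
  have hv1 : Integrable v ν := by
    apply Integrable.mono' ((integrable_const (1:ℝ)).add hv2) hv.aestronglyMeasurable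
    filter_upwards with x
    have h1 : |v x| ≤ 1 + v x ^ 2 := by nlinarith [sq_abs (v x), abs_nonneg (v x)]
    simpa using h1
  have hvc2 : Integrable (fun x => (v x - c) ^ 2) ν := by
    have he : (fun x => (v x - c) ^ 2) = fun x => v x ^ 2 - (2 * c) * v x + c ^ 2 := by
      funext x; ring
    rw [he]
    exact (hv2.sub (hv1.const_mul (2 * c))).add (integrable_const _)
  -- Chebyshev
  have cheb : ∀ t : ℝ, 0 < t → (ν {x | t ≤ |v x - c|}).toReal * t ^ 2 ≤ D := by
    intro t ht
    have hAm : MeasurableSet {x | t ≤ |v x - c|} :=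
      measurableSet_le measurable_const (hv.sub measurable_const).abs
    have h1 : ∫ x in {x | t ≤ |v x - c|}, t ^ 2 ∂ν ≤
        ∫ x in {x | t ≤ |v x - c|}, (v x - c) ^ 2 ∂ν := by
      apply setIntegral_mono_on (integrableOn_const (measure_ne_top ν _))
        hvc2.integrableOn hAm
      intro x hx
      have hx' : t ≤ |v x - c| := hx
      nlinarith [abs_nonneg (v x - c), sq_abs (v x - c)]
    rw [setIntegral_const, smul_eq_mul] at h1
    exact le_trans h1 (setIntegral_le_integral hvc2 (Eventually.of_forall fun x => sq_nonneg _))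
  -- integrability of the rpow quantities
  have hpow_le : ∀ w : ℝ, 0 ≤ w → w ^ q ≤ 1 + w ^ 2 := by
    intro w hw
    rcases le_or_gt w 1 with h1 | h1
    · have := Real.rpow_le_one hw h1 hq0.le
      nlinarith [sq_nonneg w]
    · have h2 : w ^ q ≤ w ^ (2:ℝ) := Real.rpow_le_rpow_of_exponent_le h1.le hq2
      have h3 : w ^ (2:ℝ) = w ^ (2:ℕ) := by
        rw [← Real.rpow_natCast w 2]; norm_num
      rw [h3] at h2
      nlinarith
  have hrpow_cont : Continuous fun w : ℝ => w ^ q :=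
    continuous_iff_continuousAt.mpr fun x => Real.continuousAt_rpow_const x q (Or.inr hq0.le)
  have hmax_meas : Measurable fun x => max (v x) 0 ^ q :=
    hrpow_cont.measurable.comp (hv.max measurable_const)
  have hmax_meas' : Measurable fun x => max (-v x) 0 ^ q :=
    hrpow_cont.measurable.comp (hv.neg.max measurable_const)
  have hIp : Integrable (fun x => max (v x) 0 ^ q) ν := by
    apply Integrable.mono' ((integrable_const (1:ℝ)).add hv2) hmax_meas.aestronglyMeasurable
    filter_upwards with x
    have h0 : 0 ≤ max (v x) 0 := le_max_right _ _
    have h1 : max (v x) 0 ^ q ≤ 1 + max (v x) 0 ^ 2 := hpow_le _ h0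
    have h2 : max (v x) 0 ^ 2 ≤ v x ^ 2 := by
      rcases le_total (v x) 0 with h | h
      · rw [max_eq_right h]; simpa using sq_nonneg (v x)
      · rw [max_eq_left h]
    simp only [Pi.add_apply]
    rw [Real.norm_of_nonneg (Real.rpow_nonneg h0 q)]
    linarith
  have hIm : Integrable (fun x => max (-v x) 0 ^ q) ν := by
    apply Integrable.mono' ((integrable_const (1:ℝ)).add hv2) hmax_meas'.aestronglyMeasurable
    filter_upwards with x
    have h0 : 0 ≤ max (-v x) 0 := le_max_right _ _
    have h1 : max (-v x) 0 ^ q ≤ 1 + max (-v x) 0 ^ 2 := hpow_le _ h0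
    have h2 : max (-v x) 0 ^ 2 ≤ v x ^ 2 := by
      rcases le_total (-v x) 0 with h | h
      · rw [max_eq_right h]; simpa using sq_nonneg (v x)
      · rw [max_eq_left h]; simpa using le_of_eq (neg_sq (v x))
    simp only [Pi.add_apply]
    rw [Real.norm_of_nonneg (Real.rpow_nonneg h0 q)]
    linarith
  by_cases hcase : m * c ^ 2 ≤ 8 * D
  · -- easy case
    have h1 : c ^ 2 ≤ 8 / m * D := by
      rw [div_mul_eq_mul_div, le_div_iff₀ hm]
      linarith
    have h2 : 0 ≤ 2 ^ (q + 1) * Λ / m * D := by positivity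
    nlinarith
  push_neg at hcase
  -- P bound
  have hc2 : (0:ℝ) < c ^ 2 := by positivity
  have hP : (ν {x | c / 2 ≤ |v x - c|}).toReal ≤ 4 * D / c ^ 2 := by
    have h := cheb (c / 2) (by positivity)
    rw [le_div_iff₀ hc2]
    nlinarith [h]
  have hPm : (ν {x | c / 2 ≤ |v x - c|}).toReal < m / 2 := by
    apply lt_of_le_of_lt hP
    rw [div_lt_div_iff₀ hc2 two_pos] at *
    nlinarith
  -- Q bound
  have hQ : (ν {x | v x < 0}).toReal ≤ D / c ^ 2 := by
    have hsub : {x | v x < 0} ⊆ {x | c ≤ |v x - c|} := by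
      intro x hx
      have hx' : v x < 0 := hx
      have h2 : c ≤ -(v x - c) := by linarith
      exact le_abs.mpr (Or.inr h2)
    have hmono : (ν {x | v x < 0}).toReal ≤ (ν {x | c ≤ |v x - c|}).toReal :=
      ENNReal.toReal_mono (measure_ne_top ν _) (measure_mono hsub)
    have h := cheb c hc0
    rw [le_div_iff₀ hc2]
    nlinarith
  have hQ0 : 0 ≤ (ν {x | v x < 0}).toReal := ENNReal.toReal_nonneg
  -- lower bound for I₊
  have hmeasA : MeasurableSet {x | c / 2 ≤ |v x - c|} :=
    measurableSet_le measurable_const (hv.sub measurable_const).abs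
  have hIplus : (c / 2) ^ q * (m / 2) ≤ ∫ x, max (v x) 0 ^ q ∂ν := by
    have h1 : ∫ x in {x | c / 2 ≤ |v x - c|}ᶜ, (c / 2) ^ q ∂ν ≤
        ∫ x in {x | c / 2 ≤ |v x - c|}ᶜ, max (v x) 0 ^ q ∂ν := by
      apply setIntegral_mono_on (integrableOn_const (measure_ne_top ν _))
        hIp.integrableOn hmeasA.compl
      intro x hx
      have hx' : |v x - c| < c / 2 := not_le.mp hx
      have hvx : c / 2 < v x := by
        rcases abs_lt.mp hx' with ⟨ha, hb⟩
        linarith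
      have hmax : max (v x) 0 = v x := max_eq_left (by linarith)
      rw [hmax]
      exact Real.rpow_le_rpow (by positivity) hvx.le hq0.le
    rw [setIntegral_const, smul_eq_mul, measureReal_def] at h1
    have hAc : m - (ν {x | c / 2 ≤ |v x - c|}).toReal ≤
        (ν {x | c / 2 ≤ |v x - c|}ᶜ).toReal := by
      rw [measure_compl hmeasA (measure_ne_top ν _),
        ENNReal.toReal_sub_of_le (measure_mono (Set.subset_univ _)) (measure_ne_top ν _)]
    have h2 : ∫ x in {x | c / 2 ≤ |v x - c|}ᶜ, max (v x) 0 ^ q ∂ν ≤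
        ∫ x, max (v x) 0 ^ q ∂ν :=
      setIntegral_le_integral hIp
        (Eventually.of_forall fun x => Real.rpow_nonneg (le_max_right _ _) q)
    have h3 : (c / 2) ^ q * (m / 2) ≤
        (ν {x | c / 2 ≤ |v x - c|}ᶜ).toReal * (c / 2) ^ q := by
      have hcq : (0:ℝ) ≤ (c / 2) ^ q := Real.rpow_nonneg (by positivity) q
      nlinarith [le_trans (by linarith : m / 2 ≤
        m - (ν {x | c / 2 ≤ |v x - c|}).toReal) hAc]
    linarith
  -- upper bound for I₋ (Hoelder)
  have hneg_sq_le : ∀ x, max (-v x) 0 ^ (2:ℕ) ≤ (v x - c) ^ 2 := by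
    intro x
    rcases le_total (-v x) 0 with h | h
    · rw [max_eq_right h]; simpa using sq_nonneg (v x - c)
    · rw [max_eq_left h]; nlinarith
  have hw2 : Integrable (fun x => max (-v x) 0 ^ (2:ℕ)) ν := by
    apply Integrable.mono' hvc2
      (((hv.neg.max measurable_const).pow_const 2).aestronglyMeasurable)
    filter_upwards with x
    rw [Real.norm_of_nonneg (by positivity)]
    exact hneg_sq_le x
  have hw2int : ∫ x, max (-v x) 0 ^ (2:ℕ) ∂ν ≤ D :=
    integral_mono hw2 hvc2 fun x => hneg_sq_le x
  have hw2nn : 0 ≤ ∫ x, max (-v x) 0 ^ (2:ℕ) ∂ν :=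
    integral_nonneg fun x => by positivity
  have hQ0' : 0 ≤ (ν {x | v x < 0}).toReal := ENNReal.toReal_nonneg
  have hIminus : ∫ x, max (-v x) 0 ^ q ∂ν ≤
      D ^ (q / 2) * (ν {x | v x < 0}).toReal ^ (1 - q / 2) := by
    rcases eq_or_lt_of_le hq2 with hq2e | hq2lt
    · -- q = 2
      rw [hq2e]
      rw [show (2:ℝ) / 2 = (1:ℝ) by norm_num, show (1:ℝ) - 1 = 0 by norm_num,
        Real.rpow_one, Real.rpow_zero, mul_one]
      have he : ∀ x : α, max (-v x) 0 ^ (2:ℝ) = max (-v x) 0 ^ (2:ℕ) := fun x => by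
        rw [← Real.rpow_natCast (max (-v x) 0) 2]; norm_num
      calc ∫ x, max (-v x) 0 ^ (2:ℝ) ∂ν = ∫ x, max (-v x) 0 ^ (2:ℕ) ∂ν := by simp_rw [he]
        _ ≤ D := hw2int
    · -- q < 2, Hoelder
      have h2q : (0:ℝ) < 2 - q := by linarith
      have hpq : Real.HolderConjugate (2 / q) (2 / (2 - q)) := by
        rw [Real.holderConjugate_iff]; constructor
        · exact (one_lt_div hq0).mpr hq2lt
        · rw [inv_div, inv_div]; ring
      have hBm : MeasurableSet {x | v x < 0} := measurableSet_lt hv measurable_const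
      set f : α → ℝ := fun x => max (-v x) 0 ^ q with hf
      set g : α → ℝ := Set.indicator {x | v x < 0} (fun _ => (1:ℝ)) with hgdef
      have hfg : ∀ x, f x = f x * g x := by
        intro x
        by_cases hx : x ∈ {x | v x < 0}
        · rw [hgdef]; simp [Set.indicator_of_mem hx]
        · have hvx : 0 ≤ v x := not_lt.mp hx
          have hmx : max (-v x) 0 = 0 := max_eq_right (by linarith)
          rw [hf]
          simp only [hmx, Real.zero_rpow hq0.ne', zero_mul]
      have hwm : MemLp (fun x => max (-v x) 0) 2 ν :=
        (memLp_two_iff_integrable_sq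
          ((hv.neg.max measurable_const).aestronglyMeasurable)).mpr hw2
      have hf_mem : MemLp f (ENNReal.ofReal (2 / q)) ν := by
        have h := hwm.norm_rpow_div (ENNReal.ofReal q)
        have he1 : (fun x => ‖max (-v x) 0‖ ^ (ENNReal.ofReal q).toReal) = f := by
          funext x
          rw [Real.norm_of_nonneg (le_max_right _ _), ENNReal.toReal_ofReal hq0.le, hf]
        have he2 : (2 : ENNReal) / ENNReal.ofReal q = ENNReal.ofReal (2 / q) := by
          rw [ENNReal.ofReal_div_of_pos hq0]
          norm_num
        rw [he1, he2] at h
        exact h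
      have hg_mem : MemLp g (ENNReal.ofReal (2 / (2 - q))) ν :=
        memLp_indicator_const _ hBm 1 (Or.inr (measure_ne_top ν _))
      have hHold := integral_mul_le_Lp_mul_Lq_of_nonneg hpq
        (Eventually.of_forall fun x => Real.rpow_nonneg (le_max_right _ _) q)
        (Eventually.of_forall fun x => Set.indicator_nonneg (fun _ _ => zero_le_one) x)
        hf_mem hg_mem
      -- rewrite the three integrals
      have hfgint : ∫ x, f x * g x ∂ν = ∫ x, f x ∂ν := by
        congr 1
        funext x
        exact (hfg x).symm
      have hfp : ∀ x, f x ^ (2 / q) = max (-v x) 0 ^ (2:ℕ) := by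
        intro x
        rw [hf, ← Real.rpow_natCast (max (-v x) 0) 2,
          ← Real.rpow_mul (le_max_right _ _),
          show q * (2 / q) = ((2:ℕ):ℝ) by push_cast; field_simp]
      have hgp : ∀ x, g x ^ (2 / (2 - q)) = g x := by
        intro x
        rw [hgdef]
        by_cases hx : x ∈ {x | v x < 0}
        · simp [Set.indicator_of_mem hx]
        · simp only [Set.indicator_of_notMem hx]
          exact Real.zero_rpow (by positivity)
      have hgint : ∫ x, g x ∂ν = (ν {x | v x < 0}).toReal := by
        rw [hgdef, integral_indicator_const _ hBm, smul_eq_mul, mul_one, measureReal_def]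
      change ∫ a, f a * g a ∂ν ≤ (∫ a, f a ^ (2 / q) ∂ν) ^ (1 / (2 / q)) * (∫ a, g a ^ (2 / (2 - q)) ∂ν) ^ (1 / (2 / (2 - q))) at hHold
      simp_rw [hfgint, hfp, hgp, hgint] at hHold
      have hone1 : 1 / (2 / q) = q / 2 := one_div_div _ _
      have hone2 : 1 / (2 / (2 - q)) = (2 - q) / 2 := one_div_div _ _
      rw [hone1, hone2] at hHold
      have hstep1 : (∫ x, max (-v x) 0 ^ (2:ℕ) ∂ν) ^ (q / 2) ≤ D ^ (q / 2) :=
        Real.rpow_le_rpow hw2nn hw2int (by positivity)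
      have hstep2 : (ν {x | v x < 0}).toReal ^ ((2 - q) / 2) =
          (ν {x | v x < 0}).toReal ^ (1 - q / 2) := by
        rw [show (2 - q) / 2 = 1 - q / 2 by ring]
      calc ∫ x, f x ∂ν ≤ (∫ x, max (-v x) 0 ^ (2:ℕ) ∂ν) ^ (q / 2) *
            (ν {x | v x < 0}).toReal ^ ((2 - q) / 2) := hHold
        _ ≤ D ^ (q / 2) * (ν {x | v x < 0}).toReal ^ ((2 - q) / 2) :=
            mul_le_mul_of_nonneg_right hstep1 (Real.rpow_nonneg hQ0' _)
        _ = D ^ (q / 2) * (ν {x | v x < 0}).toReal ^ (1 - q / 2) := by rw [hstep2]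
  -- combine
  have hchain : (c / 2) ^ q * (m / 2) ≤ Λ * (D ^ (q / 2) * (D / c ^ 2) ^ (1 - q / 2)) := by
    have h1 : (ν {x | v x < 0}).toReal ^ (1 - q / 2) ≤ (D / c ^ 2) ^ (1 - q / 2) :=
      Real.rpow_le_rpow hQ0 hQ (by linarith)
    have h2 : D ^ (q / 2) * (ν {x | v x < 0}).toReal ^ (1 - q / 2) ≤
        D ^ (q / 2) * (D / c ^ 2) ^ (1 - q / 2) :=
      mul_le_mul_of_nonneg_left h1 (Real.rpow_nonneg hD0 _)
    calc (c / 2) ^ q * (m / 2) ≤ ∫ x, max (v x) 0 ^ q ∂ν := hIplus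
      _ ≤ Λ * ∫ x, max (-v x) 0 ^ q ∂ν := hC1
      _ ≤ Λ * (D ^ (q / 2) * (ν {x | v x < 0}).toReal ^ (1 - q / 2)) :=
          mul_le_mul_of_nonneg_left hIminus hΛ.le
      _ ≤ Λ * (D ^ (q / 2) * (D / c ^ 2) ^ (1 - q / 2)) :=
          mul_le_mul_of_nonneg_left h2 hΛ.le
  -- D = 0 impossible
  rcases eq_or_lt_of_le hD0 with hDeq | hDpos
  · exfalso
    rw [← hDeq] at hchain
    rw [Real.zero_rpow (by positivity : q / 2 ≠ 0), zero_mul, mul_zero] at hchain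
    have : (0:ℝ) < (c / 2) ^ q * (m / 2) := by
      have := Real.rpow_pos_of_pos (by positivity : (0:ℝ) < c / 2) q
      positivity
    linarith
  -- algebra
  have hrw : D ^ (q / 2) * (D / c ^ 2) ^ (1 - q / 2) = D / c ^ (2 - q) := by
    rw [Real.div_rpow hD0 hc2.le, ← mul_div_assoc,
      ← Real.rpow_add hDpos, ← Real.rpow_natCast c 2, ← Real.rpow_mul hc0.le,
      show q / 2 + (1 - q / 2) = (1:ℝ) by ring, Real.rpow_one,
      show ((2:ℕ):ℝ) * (1 - q / 2) = 2 - q by push_cast; ring]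
  rw [hrw] at hchain
  have hcqrw : (c / 2) ^ q = c ^ q / 2 ^ q :=
    Real.div_rpow hc0.le (by norm_num : (0:ℝ) ≤ 2) q
  have hcq_pos : (0:ℝ) < c ^ q := Real.rpow_pos_of_pos hc0 q
  have hc2q_pos : (0:ℝ) < c ^ (2 - q) := Real.rpow_pos_of_pos hc0 (2 - q)
  have h2q_pos : (0:ℝ) < (2:ℝ) ^ q := Real.rpow_pos_of_pos two_pos q
  have hprod : c ^ q * c ^ (2 - q) = c ^ 2 := by
    rw [← Real.rpow_add hc0, ← Real.rpow_natCast c 2]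
    norm_num
  have h2q1 : (2:ℝ) ^ (q + 1) = 2 ^ q * 2 := by
    rw [Real.rpow_add two_pos, Real.rpow_one]
  rw [hcqrw] at hchain
  -- c^q/2^q * (m/2) ≤ Λ * (D / c^(2-q))
  have hfinal : c ^ 2 * m ≤ 2 ^ (q + 1) * Λ * D := by
    rw [div_mul_eq_mul_div,
      show Λ * (D / c ^ (2 - q)) = Λ * D / c ^ (2 - q) from (mul_div_assoc _ _ _).symm,
      div_le_div_iff₀ h2q_pos hc2q_pos] at hchain
    have h4 := mul_le_mul_of_nonneg_right hchain (by norm_num : (0:ℝ) ≤ 2)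
    calc c ^ 2 * m = (c ^ q * c ^ (2 - q)) * m := by rw [hprod]
      _ = c ^ q * (m / 2) * c ^ (2 - q) * 2 := by ring
      _ ≤ Λ * D * 2 ^ q * 2 := h4
      _ = 2 ^ (q + 1) * Λ * D := by rw [h2q1]; ring
  have h1 : c ^ 2 ≤ 2 ^ (q + 1) * Λ / m * D := by
    rw [div_mul_eq_mul_div, le_div_iff₀ hm]
    linarith
  have h2 : 0 ≤ 8 / m * D := by positivity
  nlinarith

set_option maxHeartbeats 2000000 in
/-- Generalized Poincaré inequality (Lemma 5.5): from the zero-mean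
Poincaré inequality and the two-sided power-like behaviour of a continuous strictly
increasing `Φ`, one gets `‖Φ∘ξ‖_{2;ν} ≤ C_Φ ‖∇(Φ∘ξ)‖_{2;μ}` for all zero-mean
`ξ ∈ L¹(Ω;ν)`. -/
theorem stmt_1 (N : ℕ) (Ω : Set (EuclideanSpace ℝ (Fin N))) (hΩ : IsOpen Ω)
    (ρν ρμ : EuclideanSpace ℝ (Fin N) → ℝ)
    (hρν : ∀ x ∈ Ω, 0 < ρν x) (hρμ : ∀ x ∈ Ω, 0 < ρμ x)
    (hρνm : Measurable ρν) (hρμm : Measurable ρμ)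
    (ν μ : Measure (EuclideanSpace ℝ (Fin N)))
    (hν : ν = (volume.restrict Ω).withDensity (fun x => ENNReal.ofReal (ρν x)))
    (hμ : μ = (volume.restrict Ω).withDensity (fun x => ENNReal.ofReal (ρμ x)))
    (hν0 : 0 < ν Set.univ) (hνfin : ν Set.univ < ⊤)
    (MP : ℝ) (hMP : 0 < MP)
    (hpoincare : ∀ v : EuclideanSpace ℝ (Fin N) → ℝ, LocallyLipschitzOn Ω v →
      Integrable (fun x => (v x) ^ 2) ν →
      Integrable (fun x => ‖gradient v x‖ ^ 2) μ →
      wnorm ν 2 (fun x => v x - wmean ν v) ≤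
        MP * (∫ x, ‖gradient v x‖ ^ 2 ∂μ) ^ ((1 : ℝ) / 2))
    (r : ℝ) (hr : (1 : ℝ) / 2 ≤ r) (Φ : ℝ → ℝ) (hΦc : Continuous Φ)
    (hΦmono : StrictMono Φ) (l₀ lminus lplus : ℝ)
    (hl₀ : 0 < l₀) (hlminus : 0 < lminus) (hlplus : 0 < lplus)
    (hΦ0 : Tendsto (fun x => Φ x / spow x r) (nhdsWithin 0 {(0 : ℝ)}ᶜ) (nhds l₀))
    (hΦbot : Tendsto (fun x => Φ x / spow x r) atBot (nhds lminus))
    (hΦtop : Tendsto (fun x => Φ x / spow x r) atTop (nhds lplus)) :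
    ∃ CΦ : ℝ, 0 < CΦ ∧
      ∀ ξ : EuclideanSpace ℝ (Fin N) → ℝ, Integrable ξ ν →
        (∫ x, ξ x ∂ν) = 0 →
        LocallyLipschitzOn Ω (fun x => Φ (ξ x)) →
        Integrable (fun x => (Φ (ξ x)) ^ 2) ν →
        Integrable (fun x => ‖gradient (fun y => Φ (ξ y)) x‖ ^ 2) μ →
        wnorm ν 2 (fun x => Φ (ξ x)) ≤
          CΦ * (∫ x, ‖gradient (fun y => Φ (ξ y)) x‖ ^ 2 ∂μ) ^ ((1 : ℝ) / 2) := by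
  haveI : IsFiniteMeasure ν := ⟨hνfin⟩
  have hr0 : (0:ℝ) < r := lt_of_lt_of_le (by norm_num) hr
  obtain ⟨a, b, ha, hb, hΦ00, hab⟩ := sandwich r hr0 Φ hΦc hΦmono l₀ lminus lplus
    hl₀ hlminus hlplus hΦ0 hΦbot hΦtop
  set m := (ν Set.univ).toReal with hmdef
  have hm : 0 < m := ENNReal.toReal_pos hν0.ne' hνfin.ne
  set q : ℝ := 1 / r with hqdef
  have hq0 : 0 < q := by positivity
  have hq2 : q ≤ 2 := by
    rw [hqdef, div_le_iff₀ hr0]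
    linarith
  have hrq : r * q = 1 := by
    rw [hqdef]
    field_simp
  set Λ : ℝ := (b / a) ^ q with hΛdef
  have hΛ : 0 < Λ := Real.rpow_pos_of_pos (div_pos hb ha) q
  have hΛa : Λ * a ^ q = b ^ q := by
    rw [hΛdef, Real.div_rpow hb.le ha.le, div_mul_cancel₀]
    exact (Real.rpow_pos_of_pos ha q).ne'
  set K : ℝ := 8 / m + 2 ^ (q + 1) * Λ / m with hKdef
  have hK0 : 0 < K := by positivity
  refine ⟨(1 + K * m) ^ ((1:ℝ)/2) * MP, by positivity, ?_⟩
  intro ξ hξint hξmean hlip hv2 hgrad2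
  set v : EuclideanSpace ℝ (Fin N) → ℝ := fun x => Φ (ξ x) with hvdef
  have hξm : AEMeasurable ξ ν := hξint.aemeasurable
  have hvm : AEMeasurable v ν := hΦc.measurable.comp_aemeasurable hξm
  -- basic integrability
  have hv1 : Integrable v ν := by
    apply Integrable.mono' ((integrable_const (1:ℝ)).add hv2) hvm.aestronglyMeasurable
    filter_upwards with x
    have h1 : |v x| ≤ 1 + v x ^ 2 := by nlinarith [sq_abs (v x), abs_nonneg (v x)]
    show ‖v x‖ ≤ 1 + v x ^ 2
    simpa using h1
  set c : ℝ := wmean ν v with hcdef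
  have hcm : ∫ x, v x ∂ν = c * m := by
    rw [hcdef, wmean, ← hmdef, div_mul_cancel₀]
    exact hm.ne'
  -- sign comparison pointwise lemmas
  have hup : ∀ y u : ℝ, 0 ≤ y → 0 ≤ u → y ≤ b * u ^ r → y ^ q ≤ b ^ q * u := by
    intro y u hy hu hyb
    have h1 : y ^ q ≤ (b * u ^ r) ^ q := Real.rpow_le_rpow hy hyb hq0.le
    have h2 : (b * u ^ r) ^ q = b ^ q * u := by
      rw [Real.mul_rpow hb.le (Real.rpow_nonneg hu r), ← Real.rpow_mul hu, hrq,
        Real.rpow_one]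
    linarith
  have hlo : ∀ y u : ℝ, 0 ≤ u → a * u ^ r ≤ y → a ^ q * u ≤ y ^ q := by
    intro y u hu hay
    have h0 : (0:ℝ) ≤ a * u ^ r := by positivity
    have h1 : (a * u ^ r) ^ q ≤ y ^ q := Real.rpow_le_rpow h0 hay hq0.le
    have h2 : (a * u ^ r) ^ q = a ^ q * u := by
      rw [Real.mul_rpow ha.le (Real.rpow_nonneg hu r), ← Real.rpow_mul hu, hrq,
        Real.rpow_one]
    linarith
  have hΦpos : ∀ s : ℝ, 0 ≤ s → 0 ≤ Φ s := by
    intro s hs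
    have := hΦmono.monotone hs
    rwa [hΦ00] at this
  have hΦneg : ∀ s : ℝ, s ≤ 0 → Φ s ≤ 0 := by
    intro s hs
    have := hΦmono.monotone hs
    rwa [hΦ00] at this
  have pt1 : ∀ s : ℝ, max (Φ s) 0 ^ q ≤ b ^ q * max s 0 := by
    intro s
    rcases le_or_gt 0 s with hs | hs
    · rw [max_eq_left (hΦpos s hs), max_eq_left hs]
      apply hup _ _ (hΦpos s hs) hs
      have := (hab s).2
      rwa [abs_of_nonneg (hΦpos s hs), abs_of_nonneg hs] at this
    · rw [max_eq_right (hΦneg s hs.le), max_eq_right hs.le,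
        Real.zero_rpow hq0.ne', mul_zero]
  have pt2 : ∀ s : ℝ, a ^ q * max (-s) 0 ≤ max (-(Φ s)) 0 ^ q := by
    intro s
    rcases le_or_gt s 0 with hs | hs
    · rw [max_eq_left (by linarith : (0:ℝ) ≤ -s),
        max_eq_left (by linarith [hΦneg s hs] : (0:ℝ) ≤ -(Φ s))]
      apply hlo _ _ (by linarith : (0:ℝ) ≤ -s)
      have := (hab s).1
      rwa [abs_of_nonpos (hΦneg s hs), abs_of_nonpos hs] at this
    · rw [max_eq_right (by linarith : -s ≤ 0), mul_zero]
      exact Real.rpow_nonneg (le_max_right _ _) q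
  have pt3 : ∀ s : ℝ, max (-(Φ s)) 0 ^ q ≤ b ^ q * max (-s) 0 := by
    intro s
    rcases le_or_gt s 0 with hs | hs
    · rw [max_eq_left (by linarith [hΦneg s hs] : (0:ℝ) ≤ -(Φ s)),
        max_eq_left (by linarith : (0:ℝ) ≤ -s)]
      apply hup _ _ (by linarith [hΦneg s hs]) (by linarith)
      have := (hab s).2
      rwa [abs_of_nonpos (hΦneg s hs), abs_of_nonpos hs] at this
    · rw [max_eq_right (by linarith [hΦpos s hs.le] : -(Φ s) ≤ 0),
        max_eq_right (by linarith : -s ≤ 0),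
        Real.zero_rpow hq0.ne', mul_zero]
  have pt4 : ∀ s : ℝ, a ^ q * max s 0 ≤ max (Φ s) 0 ^ q := by
    intro s
    rcases le_or_gt 0 s with hs | hs
    · rw [max_eq_left hs, max_eq_left (hΦpos s hs)]
      apply hlo _ _ hs
      have := (hab s).1
      rwa [abs_of_nonneg (hΦpos s hs), abs_of_nonneg hs] at this
    · rw [max_eq_right hs.le, mul_zero]
      exact Real.rpow_nonneg (le_max_right _ _) q
  -- integrability of rpow quantities
  have hrpow_cont : Continuous fun w : ℝ => w ^ q :=
    continuous_iff_continuousAt.mpr fun x => Real.continuousAt_rpow_const x q (Or.inr hq0.le)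
  have hpow_le : ∀ w : ℝ, 0 ≤ w → w ^ q ≤ 1 + w ^ 2 := by
    intro w hw
    rcases le_or_gt w 1 with h1 | h1
    · have := Real.rpow_le_one hw h1 hq0.le
      nlinarith [sq_nonneg w]
    · have h2 : w ^ q ≤ w ^ (2:ℝ) := Real.rpow_le_rpow_of_exponent_le h1.le hq2
      have h3 : w ^ (2:ℝ) = w ^ (2:ℕ) := by
        rw [← Real.rpow_natCast w 2]; norm_num
      rw [h3] at h2
      nlinarith
  have hIvp : Integrable (fun x => max (v x) 0 ^ q) ν := by
    apply Integrable.mono' ((integrable_const (1:ℝ)).add hv2)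
      (hrpow_cont.measurable.comp_aemeasurable
        (hvm.max aemeasurable_const)).aestronglyMeasurable
    filter_upwards with x
    have h0 : 0 ≤ max (v x) 0 := le_max_right _ _
    have h1 : max (v x) 0 ^ q ≤ 1 + max (v x) 0 ^ 2 := hpow_le _ h0
    have h2 : max (v x) 0 ^ 2 ≤ v x ^ 2 := by
      rcases le_total (v x) 0 with h | h
      · rw [max_eq_right h]; simpa using sq_nonneg (v x)
      · rw [max_eq_left h]
    show ‖max (v x) 0 ^ q‖ ≤ 1 + v x ^ 2
    rw [Real.norm_of_nonneg (Real.rpow_nonneg h0 q)]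
    linarith
  have hIvm : Integrable (fun x => max (-(v x)) 0 ^ q) ν := by
    apply Integrable.mono' ((integrable_const (1:ℝ)).add hv2)
      (hrpow_cont.measurable.comp_aemeasurable
        (hvm.neg.max aemeasurable_const)).aestronglyMeasurable
    filter_upwards with x
    have h0 : 0 ≤ max (-(v x)) 0 := le_max_right _ _
    have h1 : max (-(v x)) 0 ^ q ≤ 1 + max (-(v x)) 0 ^ 2 := hpow_le _ h0
    have h2 : max (-(v x)) 0 ^ 2 ≤ v x ^ 2 := by
      rcases le_total (-(v x)) 0 with h | h
      · rw [max_eq_right h]; simpa using sq_nonneg (v x)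
      · rw [max_eq_left h]; simpa using le_of_eq (neg_sq (v x))
    show ‖max (-(v x)) 0 ^ q‖ ≤ 1 + v x ^ 2
    rw [Real.norm_of_nonneg (Real.rpow_nonneg h0 q)]
    linarith
  have hIξp : Integrable (fun x => max (ξ x) 0) ν := hξint.pos_part
  have hIξm : Integrable (fun x => max (-(ξ x)) 0) ν := hξint.neg.pos_part
  -- balance of positive and negative parts of ξ
  have hbal : ∫ x, max (ξ x) 0 ∂ν = ∫ x, max (-(ξ x)) 0 ∂ν := by
    have h1 : ∫ x, (max (ξ x) 0 - max (-(ξ x)) 0) ∂ν =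
        ∫ x, max (ξ x) 0 ∂ν - ∫ x, max (-(ξ x)) 0 ∂ν := integral_sub hIξp hIξm
    have h2 : ∀ x, max (ξ x) 0 - max (-(ξ x)) 0 = ξ x := by
      intro x
      rcases le_total (ξ x) 0 with h | h
      · rw [max_eq_right h, max_eq_left (by linarith)]; ring
      · rw [max_eq_left h, max_eq_right (by linarith)]; ring
    simp_rw [h2] at h1
    rw [hξmean] at h1
    linarith
  -- the two comparison inequalities
  have hcomp1 : ∫ x, max (v x) 0 ^ q ∂ν ≤ Λ * ∫ x, max (-(v x)) 0 ^ q ∂ν := by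
    have s1 : ∫ x, max (v x) 0 ^ q ∂ν ≤ ∫ x, b ^ q * max (ξ x) 0 ∂ν :=
      integral_mono hIvp (hIξp.const_mul _) fun x => pt1 (ξ x)
    have s2 : ∫ x, a ^ q * max (-(ξ x)) 0 ∂ν ≤ ∫ x, max (-(v x)) 0 ^ q ∂ν :=
      integral_mono (hIξm.const_mul _) hIvm fun x => pt2 (ξ x)
    rw [integral_const_mul] at s1 s2
    calc ∫ x, max (v x) 0 ^ q ∂ν ≤ b ^ q * ∫ x, max (ξ x) 0 ∂ν := s1
      _ = Λ * (a ^ q * ∫ x, max (-(ξ x)) 0 ∂ν) := by rw [hbal, ← mul_assoc, hΛa]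
      _ ≤ Λ * ∫ x, max (-(v x)) 0 ^ q ∂ν := mul_le_mul_of_nonneg_left s2 hΛ.le
  have hcomp2 : ∫ x, max (-(v x)) 0 ^ q ∂ν ≤ Λ * ∫ x, max (v x) 0 ^ q ∂ν := by
    have s1 : ∫ x, max (-(v x)) 0 ^ q ∂ν ≤ ∫ x, b ^ q * max (-(ξ x)) 0 ∂ν :=
      integral_mono hIvm (hIξm.const_mul _) fun x => pt3 (ξ x)
    have s2 : ∫ x, a ^ q * max (ξ x) 0 ∂ν ≤ ∫ x, max (v x) 0 ^ q ∂ν :=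
      integral_mono (hIξp.const_mul _) hIvp fun x => pt4 (ξ x)
    rw [integral_const_mul] at s1 s2
    calc ∫ x, max (-(v x)) 0 ^ q ∂ν ≤ b ^ q * ∫ x, max (-(ξ x)) 0 ∂ν := s1
      _ = Λ * (a ^ q * ∫ x, max (ξ x) 0 ∂ν) := by rw [← hbal, ← mul_assoc, hΛa]
      _ ≤ Λ * ∫ x, max (v x) 0 ^ q ∂ν := mul_le_mul_of_nonneg_left s2 hΛ.le
  -- Pythagoras
  set D : ℝ := ∫ x, (v x - c) ^ 2 ∂ν with hDdef
  have hD0 : 0 ≤ D := integral_nonneg fun x => sq_nonneg _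
  have hvc2 : Integrable (fun x => (v x - c) ^ 2) ν := by
    have he : (fun x => (v x - c) ^ 2) = fun x => v x ^ 2 - (2 * c) * v x + c ^ 2 := by
      funext x; ring
    rw [he]
    exact (hv2.sub (hv1.const_mul (2 * c))).add (integrable_const _)
  have hsub : Integrable (fun x => v x ^ 2 - (2 * c) * v x) ν :=
    hv2.sub (hv1.const_mul (2 * c))
  have hpyth : ∫ x, v x ^ 2 ∂ν = D + c ^ 2 * m := by
    have h1 : D = ∫ x, (v x ^ 2 - (2 * c) * v x + c ^ 2) ∂ν := by
      rw [hDdef]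
      congr 1
      funext x
      ring
    have h2 : ∫ x, (v x ^ 2 - (2 * c) * v x + c ^ 2) ∂ν
        = (∫ x, (v x ^ 2 - (2 * c) * v x) ∂ν) + c ^ 2 * m := by
      rw [integral_add hsub (integrable_const _), integral_const, smul_eq_mul, measureReal_def, ← hmdef]
      ring
    have h3 : ∫ x, (v x ^ 2 - (2 * c) * v x) ∂ν
        = (∫ x, v x ^ 2 ∂ν) - (2 * c) * ∫ x, v x ∂ν := by
      rw [integral_sub hv2 (hv1.const_mul (2 * c)), integral_const_mul]
    rw [h2, h3, hcm] at h1
    nlinarith [h1]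
  -- key inequality c^2 ≤ K * D via core
  have hkey : c ^ 2 ≤ K * D := by
    -- measurable representative
    set v' : EuclideanSpace ℝ (Fin N) → ℝ := hvm.mk v with hv'def
    have hv'meas : Measurable v' := hvm.measurable_mk
    have hvv' : v =ᵐ[ν] v' := hvm.ae_eq_mk
    have hvv2 : (fun x => v x ^ 2) =ᵐ[ν] fun x => v' x ^ 2 :=
      hvv'.mono fun x hx => by
        show v x ^ 2 = v' x ^ 2
        rw [hx]
    have hvvc : (fun x => (v x - c) ^ 2) =ᵐ[ν] fun x => (v' x - c) ^ 2 :=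
      hvv'.mono fun x hx => by
        show (v x - c) ^ 2 = (v' x - c) ^ 2
        rw [hx]
    have hvvp : (fun x => max (v x) 0 ^ q) =ᵐ[ν] fun x => max (v' x) 0 ^ q :=
      hvv'.mono fun x hx => by
        show max (v x) 0 ^ q = max (v' x) 0 ^ q
        rw [hx]
    have hvvm : (fun x => max (-(v x)) 0 ^ q) =ᵐ[ν] fun x => max (-(v' x)) 0 ^ q :=
      hvv'.mono fun x hx => by
        show max (-(v x)) 0 ^ q = max (-(v' x)) 0 ^ q
        rw [hx]
    have hv2' : Integrable (fun x => v' x ^ 2) ν := hv2.congr hvv2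
    have hmean' : ∫ x, v' x ∂ν = c * m := by
      rw [← integral_congr_ae hvv']
      exact hcm
    have hDeq : ∫ x, (v' x - c) ^ 2 ∂ν = D := by
      rw [hDdef]
      exact integral_congr_ae hvvc.symm
    have hIp' : ∫ x, max (v' x) 0 ^ q ∂ν = ∫ x, max (v x) 0 ^ q ∂ν :=
      integral_congr_ae hvvp.symm
    have hIm' : ∫ x, max (-(v' x)) 0 ^ q ∂ν = ∫ x, max (-(v x)) 0 ^ q ∂ν :=
      integral_congr_ae hvvm.symm
    rcases lt_trichotomy c 0 with hc | hc | hc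
    · -- c < 0 : apply core to -v'
      have hres := core ν q Λ (-c) hq0 hq2 hΛ (fun x => -(v' x)) hv'meas.neg
        (by simpa using hv2')
        (by
          have : ∫ x, max (-(-(v' x))) 0 ^ q ∂ν = ∫ x, max (v' x) 0 ^ q ∂ν := by
            simp only [neg_neg]
          rw [this, hIp', hIm']
          exact hcomp2)
        (by linarith)
        (by
          rw [integral_neg, hmean']
          ring)
        (by rw [← hmdef]; exact hm)
      have he2 : ∫ x, (-(v' x) - -c) ^ 2 ∂ν = D := by
        rw [← hDeq]
        congr 1
        funext x
        ring
      rw [he2, neg_sq, ← hmdef, ← hKdef] at hres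
      exact hres
    · rw [hc]
      have : (0:ℝ) ^ 2 = 0 := by norm_num
      rw [this]
      positivity
    · have hres := core ν q Λ c hq0 hq2 hΛ v' hv'meas hv2'
        (by rw [hIp', hIm']; exact hcomp1) hc hmean' (by rw [← hmdef]; exact hm)
      rw [hDeq, ← hmdef, ← hKdef] at hres
      exact hres
  -- final assembly
  have hpoin := hpoincare v hlip hv2 hgrad2
  set G : ℝ := (∫ x, ‖gradient v x‖ ^ 2 ∂μ) ^ ((1:ℝ)/2) with hGdef
  have hG0 : 0 ≤ G := Real.rpow_nonneg (integral_nonneg fun x => by positivity) _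
  have hwnorm2 : ∀ f : EuclideanSpace ℝ (Fin N) → ℝ,
      wnorm ν 2 f = (∫ x, f x ^ 2 ∂ν) ^ ((1:ℝ)/2) := by
    intro f
    rw [wnorm]
    congr 1
    · congr 1
      funext x
      rw [show ((2:ℝ)) = ((2:ℕ):ℝ) by norm_num, Real.rpow_natCast, sq_abs]
  have hpoin' : D ^ ((1:ℝ)/2) ≤ MP * G := by
    have := hpoin
    rw [hwnorm2] at this
    rw [hDdef]
    convert this using 3
  have hstep : ∫ x, v x ^ 2 ∂ν ≤ (1 + K * m) * D := by
    rw [hpyth]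
    nlinarith [hkey, hm, hK0, hD0]
  calc wnorm ν 2 v = (∫ x, v x ^ 2 ∂ν) ^ ((1:ℝ)/2) := hwnorm2 v
    _ ≤ ((1 + K * m) * D) ^ ((1:ℝ)/2) :=
        Real.rpow_le_rpow (integral_nonneg fun x => sq_nonneg _) hstep (by norm_num)
    _ = (1 + K * m) ^ ((1:ℝ)/2) * D ^ ((1:ℝ)/2) :=
        Real.mul_rpow (by positivity) hD0
    _ ≤ (1 + K * m) ^ ((1:ℝ)/2) * (MP * G) :=
        mul_le_mul_of_nonneg_left hpoin' (Real.rpow_nonneg (by positivity) _)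
    _ = (1 + K * m) ^ ((1:ℝ)/2) * MP * G := by ring
end

section
/- Let ν be a finite Borel measure on a set Ω with 0 < ν(Ω) < ∞, let a ∈ (0,1], M_P > 0 and G ≥ 0. Let v ∈ L²(Ω;ν) and suppose ‖v - v̄‖_{2;ν} ≤ M_P · G. Then, with v^a defined pointwise by the convention x^a = |x|^a·sign(x), one has ‖v^a - \overline{v^a}‖_{2;ν} ≤ 2^{1-a/2} · ν(Ω)^{(1-a)/2} · M_P^a · G^a. -/
open MeasureTheory Real
open scoped ENNReal NNReal

lemma rpow_add_le_add_rpow' {a x y : ℝ} (hx : 0 ≤ x) (hy : 0 ≤ y) (ha : 0 ≤ a) (ha1 : a ≤ 1) :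
    (x + y) ^ a ≤ x ^ a + y ^ a := by
  have h := NNReal.rpow_add_le_add_rpow x.toNNReal y.toNNReal ha ha1
  have hx' : ((x.toNNReal : ℝ)) = x := Real.coe_toNNReal x hx
  have hy' : ((y.toNNReal : ℝ)) = y := Real.coe_toNNReal y hy
  have h2 := NNReal.coe_le_coe.2 h
  simpa [NNReal.coe_rpow, NNReal.coe_add, hx', hy'] using h2

lemma two_rpow_concave {a x y : ℝ} (hx : 0 ≤ x) (hy : 0 ≤ y) (ha : 0 ≤ a) (ha1 : a ≤ 1) :
    x ^ a + y ^ a ≤ 2 ^ (1 - a) * (x + y) ^ a := by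
  have hcon := Real.concaveOn_rpow ha ha1
  have h := hcon.2 (Set.mem_Ici.2 hx) (Set.mem_Ici.2 hy)
    (by norm_num : (0:ℝ) ≤ 1/2) (by norm_num : (0:ℝ) ≤ 1/2) (by norm_num)
  simp only [smul_eq_mul] at h
  rw [show (1/2*x + 1/2*y : ℝ) = (x+y)/2 by ring] at h
  have h3 : ((x+y)/2) ^ a = (x+y)^a / 2^a := Real.div_rpow (show (0:ℝ) ≤ x + y by linarith) (show (0:ℝ) ≤ 2 by norm_num) a
  rw [h3] at h
  have h4 : (0:ℝ) < 2 ^ a := Real.rpow_pos_of_pos two_pos a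
  have h5 : (2:ℝ) ^ (1 - a) = 2 / 2 ^ a := by
    rw [Real.rpow_sub two_pos, Real.rpow_one]
  rw [h5]
  have key : x ^ a + y ^ a ≤ 2 * ((x+y)^a / 2^a) := by linarith
  calc x ^ a + y ^ a ≤ 2 * ((x+y)^a / 2^a) := key
    _ = 2 / 2^a * (x+y)^a := by ring

lemma spow_of_nonneg {a x : ℝ} (hx : 0 ≤ x) (ha : 0 < a) : spow x a = x ^ a := by
  rcases eq_or_lt_of_le hx with h | h
  · simp [spow, ← h, Real.sign_zero, Real.zero_rpow ha.ne']
  · simp only [spow, Real.sign_of_pos h, abs_of_pos h, one_mul]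

lemma spow_neg' {a x : ℝ} : spow (-x) a = - spow x a := by
  simp [spow, Real.sign_neg, abs_neg]

lemma spow_le_spow {a x y : ℝ} (ha0 : 0 < a) (h : y ≤ x) : spow y a ≤ spow x a := by
  rcases le_or_gt 0 y with hy | hy
  · rw [spow_of_nonneg hy ha0, spow_of_nonneg (hy.trans h) ha0]
    exact Real.rpow_le_rpow hy h ha0.le
  · rcases le_or_gt 0 x with hx | hx
    · have h1 : spow y a = -spow (-y) a := by rw [← spow_neg', neg_neg]
      rw [h1, spow_of_nonneg hx ha0, spow_of_nonneg (by linarith : (0:ℝ) ≤ -y) ha0]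
      have := Real.rpow_nonneg (show (0:ℝ) ≤ -y by linarith) a
      have := Real.rpow_nonneg hx a
      linarith
    · have h1 : spow y a = -spow (-y) a := by rw [← spow_neg', neg_neg]
      have h2 : spow x a = -spow (-x) a := by rw [← spow_neg', neg_neg]
      rw [h1, h2, spow_of_nonneg (by linarith : (0:ℝ) ≤ -y) ha0,
        spow_of_nonneg (by linarith : (0:ℝ) ≤ -x) ha0]
      have := Real.rpow_le_rpow (by linarith : (0:ℝ) ≤ -x) (by linarith : -x ≤ -y) ha0.le
      linarith

lemma abs_spow {a : ℝ} (ha0 : 0 < a) (x : ℝ) : |spow x a| = |x| ^ a := by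
  rcases lt_trichotomy x 0 with h | h | h
  · simp [spow, Real.sign_of_neg h, abs_of_nonneg (Real.rpow_nonneg (abs_nonneg x) a)]
  · simp [h, spow, Real.sign_zero, Real.zero_rpow ha0.ne']
  · simp [spow, Real.sign_of_pos h, abs_of_nonneg (Real.rpow_nonneg (abs_nonneg x) a)]

lemma one_le_two_rpow {a : ℝ} (ha1 : a ≤ 1) : (1:ℝ) ≤ 2 ^ (1 - a) := by
  calc (1:ℝ) = 2 ^ (0:ℝ) := (Real.rpow_zero 2).symm
    _ ≤ 2 ^ (1 - a) := Real.rpow_le_rpow_of_exponent_le one_le_two (by linarith)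

lemma spow_sub_le {a : ℝ} (ha0 : 0 < a) (ha1 : a ≤ 1) {x y : ℝ} (h : y ≤ x) :
    spow x a - spow y a ≤ 2 ^ (1 - a) * (x - y) ^ a := by
  have h1 := one_le_two_rpow ha1
  have hxy : (0:ℝ) ≤ (x - y) ^ a := Real.rpow_nonneg (by linarith) a
  rcases le_or_gt 0 y with hy | hy
  · rw [spow_of_nonneg hy ha0, spow_of_nonneg (hy.trans h) ha0]
    have h2 : x ^ a ≤ (x - y) ^ a + y ^ a := by
      have := rpow_add_le_add_rpow' (x := x - y) (y := y) (by linarith) hy ha0.le ha1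
      rwa [sub_add_cancel] at this
    nlinarith
  · rcases lt_or_ge 0 x with hx | hx
    · have e2 : spow y a = -((-y) ^ a) := by
        rw [show spow y a = -spow (-y) a by rw [← spow_neg', neg_neg],
          spow_of_nonneg (by linarith : (0:ℝ) ≤ -y) ha0]
      rw [spow_of_nonneg hx.le ha0, e2]
      have := two_rpow_concave (x := x) (y := -y) hx.le (by linarith) ha0.le ha1
      rw [show x + -y = x - y by ring] at this
      linarith
    · have e1 : spow x a = -((-x) ^ a) := by
        rw [show spow x a = -spow (-x) a by rw [← spow_neg', neg_neg],
          spow_of_nonneg (by linarith : (0:ℝ) ≤ -x) ha0]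
      have e2 : spow y a = -((-y) ^ a) := by
        rw [show spow y a = -spow (-y) a by rw [← spow_neg', neg_neg],
          spow_of_nonneg (by linarith : (0:ℝ) ≤ -y) ha0]
      rw [e1, e2]
      have h2 : (-y) ^ a ≤ (x - y) ^ a + (-x) ^ a := by
        have := rpow_add_le_add_rpow' (x := x - y) (y := -x) (by linarith) (by linarith)
          ha0.le ha1
        rwa [show x - y + -x = -y by ring] at this
      nlinarith

lemma abs_spow_sub_le {a : ℝ} (ha0 : 0 < a) (ha1 : a ≤ 1) (x y : ℝ) :
    |spow x a - spow y a| ≤ 2 ^ (1 - a) * |x - y| ^ a := by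
  rcases le_total y x with h | h
  · rw [abs_of_nonneg (sub_nonneg.2 (spow_le_spow ha0 h)),
      abs_of_nonneg (sub_nonneg.2 h)]
    exact spow_sub_le ha0 ha1 h
  · rw [abs_sub_comm, abs_sub_comm x y,
      abs_of_nonneg (sub_nonneg.2 (spow_le_spow ha0 h)),
      abs_of_nonneg (sub_nonneg.2 h)]
    exact spow_sub_le ha0 ha1 h


lemma integral_sq_sub_wmean_le {Ω : Type*} [MeasurableSpace Ω] (ν : Measure Ω)
    [IsFiniteMeasure ν] (hν0 : (ν Set.univ).toReal ≠ 0) (f : Ω → ℝ)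
    (hf : MemLp f 2 ν) (c : ℝ) :
    ∫ x, (f x - wmean ν f) ^ 2 ∂ν ≤ ∫ x, (f x - c) ^ 2 ∂ν := by
  set m := wmean ν f with hm
  have hfi : Integrable f ν := hf.integrable one_le_two
  have hfm : MemLp (fun x => f x - m) 2 ν := hf.sub (memLp_const m)
  have hsq : Integrable (fun x => (f x - m) ^ 2) ν := hfm.integrable_sq
  have hfmi : Integrable (fun x => f x - m) ν := hfm.integrable one_le_two
  have hmean0 : ∫ x, (f x - m) ∂ν = 0 := by
    rw [integral_sub hfi (integrable_const m), integral_const, smul_eq_mul, hm, wmean, measureReal_def]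
    field_simp
    ring
  have hc : ∫ x, (f x - c) ^ 2 ∂ν
      = ∫ x, (f x - m) ^ 2 ∂ν + (ν Set.univ).toReal * (m - c) ^ 2 := by
    calc ∫ x, (f x - c) ^ 2 ∂ν
        = ∫ x, ((f x - m) ^ 2 + (2 * (m - c)) * (f x - m) + (m - c) ^ 2) ∂ν := by
          congr 1; funext x; ring
      _ = (∫ x, ((f x - m) ^ 2 + (2 * (m - c)) * (f x - m)) ∂ν)
            + ∫ _x, (m - c) ^ 2 ∂ν :=
          integral_add (hsq.add (hfmi.const_mul _)) (integrable_const _)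
      _ = ∫ x, (f x - m) ^ 2 ∂ν + (2 * (m - c)) * (∫ x, (f x - m) ∂ν)
            + (ν Set.univ).toReal * (m - c) ^ 2 := by
          rw [integral_add hsq (hfmi.const_mul _), integral_const_mul,
            integral_const, smul_eq_mul, measureReal_def]
      _ = ∫ x, (f x - m) ^ 2 ∂ν + (ν Set.univ).toReal * (m - c) ^ 2 := by
          rw [hmean0]; ring
  rw [hc]
  nlinarith [ENNReal.toReal_nonneg (a := ν Set.univ), sq_nonneg (m - c)]

lemma holder_step {Ω : Type*} [MeasurableSpace Ω] (ν : Measure Ω) [IsFiniteMeasure ν]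
    {a : ℝ} (ha0 : 0 < a) (ha1 : a ≤ 1) (w : Ω → ℝ) (hw : MemLp w 2 ν) :
    ∫ x, |w x| ^ (2 * a) ∂ν
      ≤ (∫ x, (w x) ^ 2 ∂ν) ^ a * (ν Set.univ).toReal ^ (1 - a) := by
  set p : ℝ≥0∞ := ENNReal.ofReal (2 * a) with hp
  have h2a : (0:ℝ) < 2 * a := by linarith
  have hpt : p.toReal = 2 * a := ENNReal.toReal_ofReal h2a.le
  have hp0 : p ≠ 0 := by
    simp only [hp, ne_eq, ENNReal.ofReal_eq_zero, not_le]; linarith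
  have hptop : p ≠ ∞ := ENNReal.ofReal_ne_top
  have hple : p ≤ 2 := by
    rw [hp, show (2:ℝ≥0∞) = ENNReal.ofReal 2 by norm_num]
    exact ENNReal.ofReal_le_ofReal (by linarith)
  have hwp : MemLp w p ν := hw.mono_exponent hple
  have hL := eLpNorm_le_eLpNorm_mul_rpow_measure_univ (μ := ν) (f := w) hple
    hw.aestronglyMeasurable
  have hq2 : ((2:ℝ≥0∞)).toReal = (2:ℝ) := by norm_num
  have hJ : 0 ≤ ∫ x, |w x| ^ (2 * a) ∂ν :=
    integral_nonneg fun x => Real.rpow_nonneg (abs_nonneg _) _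
  have hI : 0 ≤ ∫ x, (w x) ^ 2 ∂ν := integral_nonneg fun x => sq_nonneg _
  have hEp : eLpNorm w p ν
      = ENNReal.ofReal ((∫ x, |w x| ^ (2 * a) ∂ν) ^ (2 * a)⁻¹) := by
    rw [hwp.eLpNorm_eq_integral_rpow_norm hp0 hptop, hpt]
    simp [Real.norm_eq_abs]
  have hE2 : eLpNorm w 2 ν = ENNReal.ofReal ((∫ x, (w x) ^ 2 ∂ν) ^ (2:ℝ)⁻¹) := by
    rw [hw.eLpNorm_eq_integral_rpow_norm (by norm_num) (by norm_num), hq2]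
    congr 2
    apply integral_congr_ae
    filter_upwards with x
    rw [Real.norm_eq_abs, show ((2:ℝ)) = ((2:ℕ):ℝ) by norm_num, Real.rpow_natCast, sq_abs]
  have hr : 1 / p.toReal - 1 / ((2:ℝ≥0∞)).toReal = (2 * a)⁻¹ - 2⁻¹ := by
    rw [hpt, hq2, one_div, one_div]
  rw [hr] at hL
  have hrnn : (0:ℝ) ≤ (2 * a)⁻¹ - 2⁻¹ := by
    have h1 : (2:ℝ)⁻¹ ≤ (2 * a)⁻¹ := by
      apply inv_anti₀ h2a (by linarith)
    linarith
  have hfin : eLpNorm w 2 ν * (ν Set.univ) ^ ((2 * a)⁻¹ - 2⁻¹ : ℝ) ≠ ⊤ :=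
    ENNReal.mul_ne_top hw.2.ne
      (ENNReal.rpow_ne_top_of_nonneg hrnn (measure_ne_top ν _))
  have hreal := ENNReal.toReal_mono hfin hL
  rw [hEp, hE2, ENNReal.toReal_mul,
    ENNReal.toReal_ofReal (Real.rpow_nonneg hJ _),
    ENNReal.toReal_ofReal (Real.rpow_nonneg hI _), ← ENNReal.toReal_rpow] at hreal
  have hfinal := Real.rpow_le_rpow (Real.rpow_nonneg hJ _) hreal h2a.le
  rw [← Real.rpow_mul hJ, inv_mul_cancel₀ h2a.ne', Real.rpow_one,
    Real.mul_rpow (Real.rpow_nonneg hI _) (Real.rpow_nonneg ENNReal.toReal_nonneg _),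
    ← Real.rpow_mul hI, ← Real.rpow_mul ENNReal.toReal_nonneg,
    show (2:ℝ)⁻¹ * (2 * a) = a by ring,
    show ((2 * a)⁻¹ - 2⁻¹) * (2 * a) = 1 - a by field_simp] at hfinal
  exact hfinal

/-- Per-function form of Lemma 5.1: if `‖v - v̄‖_{2;ν} ≤ M_P G` then
`‖v^a - \overline{v^a}‖_{2;ν} ≤ 2^{1-a/2} ν(Ω)^{(1-a)/2} M_P^a G^a`, for `a ∈ (0,1]`. -/
theorem stmt_2 {Ω : Type*} [MeasurableSpace Ω] (ν : Measure Ω)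
    (hν0 : 0 < ν Set.univ) (hνfin : ν Set.univ < ⊤)
    (a : ℝ) (ha0 : 0 < a) (ha1 : a ≤ 1) (MP G : ℝ) (hMP : 0 < MP) (hG : 0 ≤ G)
    (v : Ω → ℝ) (hv : MemLp v 2 ν)
    (hpoin : wnorm ν 2 (fun x => v x - wmean ν v) ≤ MP * G) :
    wnorm ν 2 (fun x => spow (v x) a - wmean ν (fun x => spow (v x) a)) ≤
      2 ^ (1 - a / 2) * (ν Set.univ).toReal ^ ((1 - a) / 2) * MP ^ a * G ^ a := by

  haveI : IsFiniteMeasure ν := ⟨hνfin⟩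
  set μT := (ν Set.univ).toReal with hμTdef
  have hμT0 : 0 < μT := ENNReal.toReal_pos hν0.ne' hνfin.ne
  set m := wmean ν v with hmdef
  set f : Ω → ℝ := fun x => spow (v x) a with hfdef
  set c := spow m a with hcdef
  have hsign : Measurable fun t : ℝ => Real.sign t := by
    have e : (fun t : ℝ => Real.sign t)
        = fun t => if t < 0 then (-1:ℝ) else if 0 < t then 1 else 0 := rfl
    rw [e]
    refine Measurable.ite ?_ measurable_const
      (Measurable.ite ?_ measurable_const measurable_const)
    · exact measurableSet_Iio
    · exact measurableSet_Ioi
  have hspowm : Measurable fun t : ℝ => spow t a := by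
    have habs : Measurable fun t : ℝ => |t| ^ a :=
      ((Real.continuous_rpow_const ha0.le).comp continuous_abs).measurable
    exact hsign.mul habs
  have hfmeas : AEStronglyMeasurable f ν :=
    (hspowm.comp_aemeasurable hv.aestronglyMeasurable.aemeasurable).aestronglyMeasurable
  have hf2 : MemLp f 2 ν := by
    have hg : MemLp (fun x => 1 + ‖v x‖) 2 ν := (memLp_const (1:ℝ)).add hv.norm
    refine MemLp.of_le hg hfmeas (ae_of_all _ fun x => ?_)
    simp only [hfdef]
    rw [Real.norm_eq_abs, abs_spow ha0, Real.norm_eq_abs (v x), Real.norm_eq_abs]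
    have hnn : (0:ℝ) ≤ 1 + |v x| := by positivity
    rw [abs_of_nonneg hnn]
    rcases le_total (|v x|) 1 with h | h
    · have h2 := Real.rpow_le_one (abs_nonneg _) h ha0.le
      linarith [abs_nonneg (v x)]
    · have h2 : |v x| ^ a ≤ |v x| ^ (1:ℝ) := Real.rpow_le_rpow_of_exponent_le h ha1
      rw [Real.rpow_one] at h2; linarith
  set w : Ω → ℝ := fun x => v x - m with hwdef
  have hw : MemLp w 2 ν := hv.sub (memLp_const m)
  have habs2 : ∀ t : ℝ, |t| ^ (2:ℝ) = t ^ 2 := fun t => by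
    rw [show ((2:ℝ)) = ((2:ℕ):ℝ) by norm_num, Real.rpow_natCast, sq_abs]
  set I := ∫ x, (w x) ^ 2 ∂ν with hIdef
  have hI0 : 0 ≤ I := integral_nonneg fun x => sq_nonneg _
  have hMPG : (0:ℝ) ≤ MP * G := by positivity
  have hIle : I ≤ (MP * G) ^ 2 := by
    have h1 : I ^ ((1:ℝ)/2) ≤ MP * G := by
      have hh := hpoin
      rw [wnorm] at hh
      simp only [habs2] at hh
      exact hh
    have h2 : I = (I ^ ((1:ℝ)/2)) ^ 2 := by
      rw [← Real.rpow_natCast (I ^ ((1:ℝ)/2)) 2, ← Real.rpow_mul hI0]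
      norm_num
    rw [h2]
    exact pow_le_pow_left₀ (Real.rpow_nonneg hI0 _) h1 2
  have hmin := integral_sq_sub_wmean_le ν hμT0.ne' f hf2 c
  set J := ∫ x, |w x| ^ (2*a) ∂ν with hJdef
  have hholder := holder_step ν ha0 ha1 w hw
  have hptw : ∀ x, (f x - c) ^ 2 ≤ 2 ^ (2 - 2*a) * |w x| ^ (2*a) := by
    intro x
    have hb : |f x - c| ≤ 2 ^ (1-a) * |w x| ^ a := by
      simp only [hfdef, hcdef, hwdef]
      exact abs_spow_sub_le ha0 ha1 (v x) m
    calc (f x - c)^2 = |f x - c|^2 := (sq_abs _).symm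
      _ ≤ (2^(1-a) * |w x| ^ a)^2 := pow_le_pow_left₀ (abs_nonneg _) hb 2
      _ = 2^(2-2*a) * |w x|^(2*a) := by
          rw [mul_pow, ← Real.rpow_natCast ((2:ℝ)^(1-a)) 2,
            ← Real.rpow_mul (by norm_num : (0:ℝ) ≤ 2),
            ← Real.rpow_natCast (|w x| ^ a) 2, ← Real.rpow_mul (abs_nonneg _)]
          push_cast
          rw [show (1-a)*2 = 2-2*a by ring, show a*2 = 2*a by ring]
  have hint1 : Integrable (fun x => (f x - c)^2) ν := (hf2.sub (memLp_const c)).integrable_sq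
  have hint2 : Integrable (fun x => |w x| ^ (2*a)) ν := by
    have hwp : MemLp w (ENNReal.ofReal (2*a)) ν := hw.mono_exponent (by
      rw [show (2:ℝ≥0∞) = ENNReal.ofReal 2 by norm_num]
      exact ENNReal.ofReal_le_ofReal (by linarith))
    have h3 := hwp.integrable_norm_rpow
      (by simp only [ne_eq, ENNReal.ofReal_eq_zero, not_le]; linarith)
      ENNReal.ofReal_ne_top
    rw [ENNReal.toReal_ofReal (by linarith : (0:ℝ) ≤ 2*a)] at h3
    simpa [Real.norm_eq_abs] using h3
  have hchain : ∫ x, (f x - c)^2 ∂ν ≤ 2^(2-2*a) * J := by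
    calc ∫ x, (f x - c)^2 ∂ν ≤ ∫ x, 2^(2-2*a) * |w x|^(2*a) ∂ν :=
        integral_mono hint1 (hint2.const_mul _) hptw
      _ = 2^(2-2*a) * J := integral_const_mul _ _
  have h2nn : (0:ℝ) ≤ (2:ℝ)^(2-2*a) := Real.rpow_nonneg (by norm_num) _
  have htot : ∫ x, (f x - wmean ν f)^2 ∂ν ≤ 2^(2-2*a) * ((MP*G)^2)^a * μT^(1-a) := by
    have hIa : I ^ a ≤ ((MP*G)^2)^a := Real.rpow_le_rpow hI0 hIle ha0.le
    have hstep : J ≤ ((MP*G)^2)^a * μT^(1-a) := by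
      refine hholder.trans ?_
      exact mul_le_mul_of_nonneg_right hIa (Real.rpow_nonneg ENNReal.toReal_nonneg _)
    calc ∫ x, (f x - wmean ν f)^2 ∂ν ≤ ∫ x, (f x - c)^2 ∂ν := hmin
      _ ≤ 2^(2-2*a) * J := hchain
      _ ≤ 2^(2-2*a) * (((MP*G)^2)^a * μT^(1-a)) := mul_le_mul_of_nonneg_left hstep h2nn
      _ = 2^(2-2*a) * ((MP*G)^2)^a * μT^(1-a) := by ring
  rw [wnorm]
  have hKeq : ∫ x, |spow (v x) a - wmean ν f| ^ (2:ℝ) ∂ν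
      = ∫ x, (f x - wmean ν f)^2 ∂ν := by
    simp only [habs2, hfdef]
  rw [hKeq]
  have hK0 : 0 ≤ ∫ x, (f x - wmean ν f)^2 ∂ν := integral_nonneg fun x => sq_nonneg _
  have hfin := Real.rpow_le_rpow hK0 htot (by norm_num : (0:ℝ) ≤ 1/2)
  refine hfin.trans ?_
  have e0 : ((MP*G)^2 : ℝ) = (MP*G)^(2:ℝ) := by
    rw [show (2:ℝ) = ((2:ℕ):ℝ) by norm_num, Real.rpow_natCast]
  have eB : (2^(2-2*a) * ((MP*G)^2)^a * μT^(1-a)) ^ ((1:ℝ)/2)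
      = 2^(1-a) * (MP*G)^a * μT^((1-a)/2) := by
    have a2nn : (0:ℝ) ≤ ((MP*G)^2)^a := Real.rpow_nonneg (sq_nonneg _) _
    have a3nn : (0:ℝ) ≤ μT^(1-a) := Real.rpow_nonneg ENNReal.toReal_nonneg _
    rw [Real.mul_rpow (mul_nonneg h2nn a2nn) a3nn, Real.mul_rpow h2nn a2nn]
    have e1 : ((2:ℝ)^(2-2*a))^((1:ℝ)/2) = 2^(1-a) := by
      rw [← Real.rpow_mul (by norm_num : (0:ℝ) ≤ 2),
        show (2-2*a)*((1:ℝ)/2) = 1-a by ring]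
    have e2 : (((MP*G)^2)^a)^((1:ℝ)/2) = (MP*G)^a := by
      rw [e0, ← Real.rpow_mul hMPG, ← Real.rpow_mul hMPG,
        show (2:ℝ)*a*((1:ℝ)/2) = a by ring]
    have e3 : (μT^(1-a))^((1:ℝ)/2) = μT^((1-a)/2) := by
      rw [← Real.rpow_mul ENNReal.toReal_nonneg,
        show (1-a)*((1:ℝ)/2) = (1-a)/2 by ring]
    rw [e1, e2, e3]
  rw [eB, Real.mul_rpow hMP.le hG]
  have h2le : (2:ℝ)^(1-a) ≤ 2^(1-a/2) :=
    Real.rpow_le_rpow_of_exponent_le one_le_two (by linarith)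
  calc 2^(1-a) * (MP^a * G^a) * μT^((1-a)/2)
      = (MP^a * G^a * μT^((1-a)/2)) * 2^(1-a) := by ring
    _ ≤ (MP^a * G^a * μT^((1-a)/2)) * 2^(1-a/2) := by
        apply mul_le_mul_of_nonneg_left h2le
        positivity
    _ = 2^(1-a/2) * μT^((1-a)/2) * MP^a * G^a := by ring
end

section
/- Let ν be a finite Borel measure on a set Ω with 0 < ν(Ω) < ∞, let r ∈ [1,2), ε > 0, M_P > 0 and G ≥ 0. Let v be measurable with 0 < ‖v‖_{r;ν} < ∞ and ‖v‖_{2;ν} < ∞, let v̄ := (∫_Ω v dν)/ν(Ω), and suppose ‖v - v̄‖_{2;ν} ≤ M_P · G. Then ( J(r,v) + log(ε)/(2-r) ) · (2-r) · ‖v‖²_{r;ν} / (2 ε M_P²) - v̄² · ν(Ω) / M_P² ≤ G². -/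
set_option maxHeartbeats 1000000


open MeasureTheory Real

/-- Entropy functional `J(r,f) = ∫ (|f|^r/‖f‖_{r;ν}^r) log(|f|/‖f‖_{r;ν}) dν`. -/
noncomputable def entropyJ {Ω : Type*} [MeasurableSpace Ω] (ν : Measure Ω) (r : ℝ)
    (f : Ω → ℝ) : ℝ :=
  ∫ x, |f x| ^ r / (wnorm ν r f) ^ r * Real.log (|f x| / wnorm ν r f) ∂ν

lemma key_pt (r ε : ℝ) (hr1 : 1 ≤ r) (hr2 : r < 2) (hε : 0 < ε) {y : ℝ} (hy : 0 ≤ y) :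
    y ^ r * (Real.log y + Real.log ε / (2 - r)) ≤ ε * y ^ (2:ℝ) / (2 - r) := by
  have h2r : 0 < 2 - r := by linarith
  rcases eq_or_lt_of_le hy with h0 | h0
  · rw [← h0, Real.zero_rpow (by positivity : r ≠ 0),
      Real.zero_rpow (by norm_num : (2:ℝ) ≠ 0)]
    simp
  · have hlog : Real.log ε + (2 - r) * Real.log y ≤ ε * y ^ (2 - r) := by
      have h := Real.log_le_sub_one_of_pos
        (show 0 < ε * y ^ (2 - r) by positivity)
      rw [Real.log_mul (ne_of_gt hε) (by positivity), Real.log_rpow h0] at h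
      linarith
    have hyr : 0 < y ^ r := Real.rpow_pos_of_pos h0 r
    have heq : y ^ r * y ^ (2 - r) = y ^ (2:ℝ) := by
      rw [← Real.rpow_add h0]; norm_num
    have h1 : y ^ r * (Real.log ε + (2 - r) * Real.log y) ≤ y ^ r * (ε * y ^ (2 - r)) :=
      mul_le_mul_of_nonneg_left hlog hyr.le
    rw [show y ^ r * (ε * y ^ (2 - r)) = ε * (y ^ r * y ^ (2 - r)) by ring, heq] at h1
    rw [le_div_iff₀ h2r]
    have hd : Real.log ε / (2 - r) * (2 - r) = Real.log ε :=
      div_mul_cancel₀ _ (ne_of_gt h2r)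
    calc y ^ r * (Real.log y + Real.log ε / (2 - r)) * (2 - r)
        = y ^ r * (Real.log ε / (2 - r) * (2 - r) + (2 - r) * Real.log y) := by ring
      _ = y ^ r * (Real.log ε + (2 - r) * Real.log y) := by rw [hd]
      _ ≤ ε * y ^ (2:ℝ) := h1

lemma bound_pt (r : ℝ) (hr1 : 1 ≤ r) (hr2 : r < 2) {y : ℝ} (hy : 0 ≤ y) :
    |y ^ r * Real.log y| ≤ 1 + y ^ (2:ℝ) / (2 - r) := by
  have h2r : 0 < 2 - r := by linarith
  have hy2 : 0 ≤ y ^ (2:ℝ) := Real.rpow_nonneg hy _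
  rcases eq_or_lt_of_le hy with h0 | h0
  · rw [← h0, Real.zero_rpow (by positivity : r ≠ 0)]
    simp [hy2]
  rcases le_or_gt y 1 with hle | hgt
  · -- y ∈ (0,1]: |y^r log y| = y^r * (-log y) ≤ y^(r-1) ≤ 1
    have hlogy : Real.log y ≤ 0 := Real.log_nonpos hy hle
    have habs : |y ^ r * Real.log y| = y ^ r * (-Real.log y) := by
      rw [abs_of_nonpos (mul_nonpos_of_nonneg_of_nonpos (Real.rpow_nonneg hy r) hlogy)]
      ring
    have hneg : -Real.log y = Real.log (1/y) := by
      rw [Real.log_div one_ne_zero (ne_of_gt h0), Real.log_one]; ring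
    have hlb : -Real.log y ≤ 1/y := by
      rw [hneg]
      have := Real.log_le_sub_one_of_pos (show (0:ℝ) < 1/y by positivity)
      linarith
    have h1 : y ^ r * (-Real.log y) ≤ y ^ r * (1/y) :=
      mul_le_mul_of_nonneg_left hlb (Real.rpow_nonneg hy r)
    have h2 : y ^ r * (1/y) = y ^ (r - 1) := by
      rw [Real.rpow_sub h0, Real.rpow_one]; ring
    have h3 : y ^ (r - 1) ≤ 1 := by
      apply Real.rpow_le_one hy hle (by linarith)
    rw [habs]
    have : y ^ r * (-Real.log y) ≤ 1 := by rw [h2] at h1; linarith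
    have : (0:ℝ) ≤ y ^ (2:ℝ) / (2 - r) := by positivity
    linarith
  · -- y > 1: 0 ≤ log y ≤ y^(2-r)/(2-r), so y^r log y ≤ y^2/(2-r)
    have hlogy : 0 ≤ Real.log y := Real.log_nonneg hgt.le
    have habs : |y ^ r * Real.log y| = y ^ r * Real.log y := by
      rw [abs_of_nonneg (mul_nonneg (Real.rpow_nonneg hy r) hlogy)]
    have hlog : (2 - r) * Real.log y ≤ y ^ (2 - r) := by
      have h := Real.log_le_sub_one_of_pos (show 0 < y ^ (2-r) by positivity)
      rw [Real.log_rpow h0] at h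
      linarith
    have h1 : y ^ r * ((2 - r) * Real.log y) ≤ y ^ r * y ^ (2 - r) :=
      mul_le_mul_of_nonneg_left hlog (Real.rpow_nonneg hy r)
    rw [← Real.rpow_add h0] at h1
    norm_num at h1
    rw [habs]
    have hkey : y ^ r * Real.log y ≤ y ^ (2:ℝ) / (2 - r) := by
      rw [le_div_iff₀ h2r]
      have hcast : y ^ (2:ℝ) = y ^ (2:ℕ) := by
        rw [← Real.rpow_natCast y 2]; norm_num
      rw [hcast]
      calc y ^ r * Real.log y * (2 - r) = y ^ r * ((2 - r) * Real.log y) := by ring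
        _ ≤ y ^ (2:ℕ) := h1
    linarith

/-- Per-function form of the logarithmic inequalities for the
Neumann problem: if `‖v - v̄‖_{2;ν} ≤ M_P G` then
`(J(r,v) + log ε/(2-r)) (2-r) ‖v‖_{r;ν}² / (2 ε M_P²) - v̄² ν(Ω)/M_P² ≤ G²`. -/
theorem stmt_4 {Ω : Type*} [MeasurableSpace Ω] (ν : Measure Ω)
    (hν0 : 0 < ν Set.univ) (hνfin : ν Set.univ < ⊤)
    (r ε MP G : ℝ) (hr1 : 1 ≤ r) (hr2 : r < 2) (hε : 0 < ε) (hMP : 0 < MP)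
    (hG : 0 ≤ G) (v : Ω → ℝ) (hvmeas : Measurable v)
    (hvr0 : 0 < wnorm ν r v) (hvr : Integrable (fun x => |v x| ^ r) ν)
    (hv2 : Integrable (fun x => |v x| ^ (2 : ℝ)) ν)
    (hpoin : wnorm ν 2 (fun x => v x - wmean ν v) ≤ MP * G) :
    (entropyJ ν r v + Real.log ε / (2 - r)) * (2 - r) * (wnorm ν r v) ^ 2 /
        (2 * ε * MP ^ 2) - (wmean ν v) ^ 2 * (ν Set.univ).toReal / MP ^ 2 ≤
      G ^ 2 := by
  haveI : IsFiniteMeasure ν := ⟨hνfin⟩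
  have h2r : 0 < 2 - r := by linarith
  set N := wnorm ν r v with hN
  set m := wmean ν v with hm
  set c := Real.log ε / (2 - r) with hc
  set νR := (ν Set.univ).toReal with hνR
  have hνRpos : 0 < νR := ENNReal.toReal_pos hν0.ne' hνfin.ne
  -- N ^ r = ∫ |v|^r
  have hA0 : 0 ≤ ∫ x, |v x| ^ r ∂ν :=
    integral_nonneg fun x => Real.rpow_nonneg (abs_nonneg _) r
  have hNA : (∫ x, |v x| ^ r ∂ν) = N ^ r := by
    rw [hN, wnorm, ← Real.rpow_mul hA0,
      one_div_mul_cancel (by positivity : r ≠ 0), Real.rpow_one]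
  -- pointwise rewrite of J integrand
  have hg_eq : ∀ x : Ω, |v x| ^ r / N ^ r * Real.log (|v x| / N)
      = (|v x| / N) ^ r * Real.log (|v x| / N) := by
    intro x
    rw [Real.div_rpow (abs_nonneg _) hvr0.le]
  have hy2 : ∀ x : Ω, (|v x| / N) ^ (2:ℝ) = |v x| ^ (2:ℝ) / N ^ 2 := by
    intro x
    rw [Real.div_rpow (abs_nonneg _) hvr0.le, ← Real.rpow_natCast N 2]
    norm_num
  -- measurability of J integrand
  have hgmeas : AEStronglyMeasurable
      (fun x => |v x| ^ r / N ^ r * Real.log (|v x| / N)) ν := by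
    apply Measurable.aestronglyMeasurable
    measurability
  -- integrability of J integrand
  have hgint : Integrable (fun x => |v x| ^ r / N ^ r * Real.log (|v x| / N)) ν := by
    apply Integrable.mono
      ((integrable_const (1:ℝ)).add ((hv2.div_const (N^2)).div_const (2 - r))) hgmeas
    filter_upwards with x
    have hy : (0:ℝ) ≤ |v x| / N := by positivity
    have hb := bound_pt r hr1 hr2 hy
    rw [hy2 x] at hb
    simp only [Pi.add_apply, Real.norm_eq_abs]
    rw [hg_eq x]
    exact le_trans hb (le_abs_self _)
  -- pointwise key inequality
  have hpt : ∀ x, |v x| ^ r / N ^ r * Real.log (|v x| / N) + c * (|v x| ^ r / N ^ r)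
      ≤ ε * |v x| ^ (2:ℝ) / (N ^ 2 * (2 - r)) := by
    intro x
    have hy : (0:ℝ) ≤ |v x| / N := by positivity
    have hk := key_pt r ε hr1 hr2 hε hy
    rw [hy2 x, Real.div_rpow (abs_nonneg _) hvr0.le] at hk
    calc |v x| ^ r / N ^ r * Real.log (|v x| / N) + c * (|v x| ^ r / N ^ r)
        = |v x| ^ r / N ^ r * (Real.log (|v x| / N) + c) := by ring
      _ ≤ ε * (|v x| ^ (2:ℝ) / N ^ 2) / (2 - r) := hk
      _ = ε * |v x| ^ (2:ℝ) / (N ^ 2 * (2 - r)) := by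
          rw [← mul_div_assoc, div_div]
  have hint_cd : Integrable (fun x => c * (|v x| ^ r / N ^ r)) ν :=
    (hvr.div_const _).const_mul c
  have hintR : Integrable (fun x => ε * |v x| ^ (2:ℝ) / (N ^ 2 * (2 - r))) ν :=
    (hv2.const_mul ε).div_const _
  have hIle : ∫ x, (|v x| ^ r / N ^ r * Real.log (|v x| / N)
        + c * (|v x| ^ r / N ^ r)) ∂ν
      ≤ ∫ x, ε * |v x| ^ (2:ℝ) / (N ^ 2 * (2 - r)) ∂ν :=
    integral_mono (hgint.add hint_cd) hintR hpt
  set I2 := ∫ x, |v x| ^ (2:ℝ) ∂ν with hI2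
  have hNrpos : 0 < N ^ r := Real.rpow_pos_of_pos hvr0 r
  have hLHS : ∫ x, (|v x| ^ r / N ^ r * Real.log (|v x| / N)
        + c * (|v x| ^ r / N ^ r)) ∂ν = entropyJ ν r v + c := by
    rw [integral_add hgint hint_cd, integral_const_mul, integral_div, hNA,
      div_self (ne_of_gt hNrpos), mul_one]
    rfl
  have hRHS : ∫ x, ε * |v x| ^ (2:ℝ) / (N ^ 2 * (2 - r)) ∂ν
      = ε / (N ^ 2 * (2 - r)) * I2 := by
    rw [show (fun x => ε * |v x| ^ (2:ℝ) / (N ^ 2 * (2 - r)))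
        = fun x => (ε / (N ^ 2 * (2 - r))) * |v x| ^ (2:ℝ) from
      funext fun x => by ring, integral_const_mul]
  rw [hLHS, hRHS] at hIle
  -- the L² identity
  have hvsq : ∀ t : ℝ, |t| ^ (2:ℝ) = t ^ 2 := by
    intro t
    rw [show ((2:ℝ)) = ((2:ℕ):ℝ) by norm_num, Real.rpow_natCast, sq_abs]
  have hv_int : Integrable v ν := by
    apply Integrable.mono ((integrable_const (1:ℝ)).add hv2) hvmeas.aestronglyMeasurable
    filter_upwards with x
    simp only [Pi.add_apply, Real.norm_eq_abs, hvsq]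
    have h1 : |v x| ≤ 1 + v x ^ 2 := by nlinarith [sq_abs (v x), abs_nonneg (v x)]
    exact le_trans h1 (le_abs_self _)
  have hvm2 : Integrable (fun x => v x ^ 2) ν := by
    have := hv2
    simp only [hvsq] at this
    exact this
  have hmean : ∫ x, v x ∂ν = m * νR := by
    rw [hm, wmean, ← hνR, div_mul_cancel₀ _ (ne_of_gt hνRpos)]
  have hWeq : ∫ x, |v x - m| ^ (2:ℝ) ∂ν = I2 - m ^ 2 * νR := by
    have e1 : ∫ x, |v x - m| ^ (2:ℝ) ∂ν = ∫ x, (v x ^ 2 - (2*m) * v x) + m ^ 2 ∂ν := by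
      congr 1
      funext x
      rw [hvsq]
      ring
    have hsub : Integrable (fun x => v x ^ 2 - (2*m) * v x) ν :=
      hvm2.sub (hv_int.const_mul (2*m))
    rw [e1, integral_add hsub (integrable_const _),
      integral_sub hvm2 (hv_int.const_mul (2*m)), integral_const_mul, integral_const,
      smul_eq_mul, hmean]
    have e2 : I2 = ∫ x, v x ^ 2 ∂ν := by
      rw [hI2]
      congr 1
      funext x
      rw [hvsq]
    rw [e2, measureReal_def, ← hνR]
    ring
  have hW0 : 0 ≤ ∫ x, |v x - m| ^ (2:ℝ) ∂ν :=
    integral_nonneg fun x => Real.rpow_nonneg (abs_nonneg _) _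
  have hI2le : I2 ≤ MP ^ 2 * G ^ 2 + m ^ 2 * νR := by
    have h1 : (∫ x, |v x - m| ^ (2:ℝ) ∂ν) ≤ (MP * G) ^ 2 := by
      have h2 : ((∫ x, |v x - m| ^ (2:ℝ) ∂ν) ^ ((1:ℝ)/2)) ^ (2:ℕ)
          = ∫ x, |v x - m| ^ (2:ℝ) ∂ν := by
        rw [← Real.rpow_natCast _ 2, ← Real.rpow_mul hW0]
        norm_num
      rw [← h2]
      apply pow_le_pow_left₀ (Real.rpow_nonneg hW0 _)
      exact hpoin
      -- wnorm ν 2 (fun x => v x - m) = (∫ |v x - m|^(2:ℝ))^(1/2)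
    rw [hWeq, mul_pow] at h1
    linarith
  -- final arithmetic
  have hN2 : 0 < N ^ 2 := by positivity
  have hmν : 0 ≤ m ^ 2 * νR := by positivity
  have ha : (entropyJ ν r v + c) * (2 - r) * N ^ 2 ≤ ε * I2 := by
    have h1 : (entropyJ ν r v + c) * ((2 - r) * N ^ 2) ≤
        (ε / (N ^ 2 * (2 - r)) * I2) * ((2 - r) * N ^ 2) :=
      mul_le_mul_of_nonneg_right hIle (by positivity)
    calc (entropyJ ν r v + c) * (2 - r) * N ^ 2
        = (entropyJ ν r v + c) * ((2 - r) * N ^ 2) := by ring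
      _ ≤ (ε / (N ^ 2 * (2 - r)) * I2) * ((2 - r) * N ^ 2) := h1
      _ = ε * I2 * ((N ^ 2 * (2 - r)) / (N ^ 2 * (2 - r))) := by ring
      _ = ε * I2 := by
          rw [div_self (by positivity : (N ^ 2 * (2 - r)) ≠ 0), mul_one]
  have hb : (entropyJ ν r v + c) * (2 - r) * N ^ 2 / (2 * ε * MP ^ 2)
      ≤ (MP ^ 2 * G ^ 2 + m ^ 2 * νR) / (2 * MP ^ 2) := by
    rw [div_le_div_iff₀ (by positivity) (by positivity)]
    have h2 : ε * I2 ≤ ε * (MP ^ 2 * G ^ 2 + m ^ 2 * νR) :=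
      mul_le_mul_of_nonneg_left hI2le hε.le
    nlinarith [mul_le_mul_of_nonneg_right (ha.trans h2)
      (by positivity : (0:ℝ) ≤ 2 * MP ^ 2)]
  have hd : (MP ^ 2 * G ^ 2 + m ^ 2 * νR) / (2 * MP ^ 2)
      = G ^ 2 / 2 + m ^ 2 * νR / (2 * MP ^ 2) := by
    field_simp
  have he : m ^ 2 * νR / (2 * MP ^ 2) ≤ m ^ 2 * νR / MP ^ 2 := by
    apply div_le_div_of_nonneg_left hmν (by positivity)
    nlinarith
  rw [hd] at hb
  have hg2 : 0 ≤ G ^ 2 := by positivity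
  linarith
end

section
/- Let m > 1. There exists a constant B > 0 such that the function v(x,t) = log(x+1) · (1 + B^{-1}(m-1)t)^{-1/(m-1)}, defined for x > 0 and t > 0, is a pointwise subsolution of the weighted porous media equation u_t = e^x (e^{-x}(u^m)_x)_x on (0,∞) × (0,∞); that is, for every x > 0 and t > 0, ∂_t v(x,t) ≤ e^x · d/dx( e^{-x} · d/dx( v(x,t)^m ) ), where the x-derivatives on the right-hand side are taken of the function x ↦ e^{-x}·d/dx((v(x,t))^m) at the point x. -/
open Real

/-- The family of functions `v_B(x,t) = log(x+1) · (1 + B⁻¹(m-1)t)^{-1/(m-1)}`. -/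
noncomputable def subSol (m B x t : ℝ) : ℝ :=
  Real.log (x + 1) * (1 + B⁻¹ * (m - 1) * t) ^ (-(m - 1)⁻¹)

/-- Abstract core inequality, with the constant data abstracted away. -/
lemma star_core (m s X F s₀ C a : ℝ) (hm : 1 < m) (hs : 0 < s) (hX : 1 < X)
    (hF : 0 < F) (hs₀ : 0 < s₀) (hs₀1 : s₀ ≤ 1) (hs₀2 : s₀ ≤ (m - 1) / 4)
    (hC : C = 2 * m * (F + s₀⁻¹ * s₀⁻¹)) (ha : a = s ^ (m - 2))
    (hXs : s < 1 → X < 3) (hbig : 1 ≤ s → a ≤ F * X) :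
    m * s ^ (m - 1) * X⁻¹ + m * s ^ (m - 1) * (X⁻¹ * X⁻¹)
        - m * (m - 1) * s ^ (m - 2) * (X⁻¹ * X⁻¹)
      ≤ C * s := by
  have hm1 : (0:ℝ) < m - 1 := by linarith
  have hC0 : 0 < C := by
    rw [hC]
    have h1 : 0 < F + s₀⁻¹ * s₀⁻¹ := by positivity
    have h2 : 0 < 2 * m := by linarith
    exact mul_pos h2 h1
  have hX0 : (0:ℝ) < X := by linarith
  have ha0 : (0:ℝ) ≤ a := ha ▸ Real.rpow_nonneg hs.le _
  have hrw : s ^ (m - 1) = a * s := by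
    rw [ha, show m - 1 = (m - 2) + 1 by ring, Real.rpow_add hs, Real.rpow_one]
  rw [hrw, ← ha]
  rcases le_or_gt (s * (X + 1)) (m - 1) with hcase | hcase
  · -- nonpositive elliptic bracket
    have hma : 0 ≤ m * a := by positivity
    have key : m * a * (s * (X + 1)) ≤ m * a * (m - 1) :=
      mul_le_mul_of_nonneg_left hcase hma
    have hCs : 0 ≤ C * s := by positivity
    have hXi : 0 < X⁻¹ := by positivity
    have hXX : X * X⁻¹ = 1 := mul_inv_cancel₀ hX0.ne'
    nlinarith [mul_le_mul_of_nonneg_right key (mul_nonneg hXi.le hXi.le),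
      mul_nonneg (mul_nonneg hma hs.le) hXi.le]
  · -- positive bracket case
    have hss₀ : s₀ ≤ s := by
      rcases le_or_gt 1 s with h1 | h1
      · exact le_trans hs₀1 h1
      · have hXe : X < 3 := hXs h1
        have hX4 : s * (X + 1) < s * 4 :=
          mul_lt_mul_of_pos_left (by linarith) hs
        have h4s : m - 1 < 4 * s := by linarith
        exact le_trans hs₀2 (by linarith)
    have h2 : 2 * m * a ≤ C * X := by
      rcases le_or_gt s 1 with h1 | h1
      · -- small s : a ≤ s₀⁻¹ * s₀⁻¹
        have hsm : s ^ m ≤ 1 := Real.rpow_le_one hs.le h1 (by linarith)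
        have haeq : a = s ^ m / (s * s) := by
          rw [ha, show m - 2 = m - (2:ℕ) by norm_num, Real.rpow_sub hs,
            Real.rpow_natCast]
          ring_nf
        have hbound : a ≤ s₀⁻¹ * s₀⁻¹ := by
          rw [haeq, div_le_iff₀ (by positivity : (0:ℝ) < s * s)]
          have hss : s₀ * s₀ ≤ s * s := mul_le_mul hss₀ hss₀ hs₀.le hs.le
          have hi : (0:ℝ) < s₀⁻¹ := by positivity
          have hone : s₀ * s₀⁻¹ = 1 := mul_inv_cancel₀ hs₀.ne'
          calc s ^ m ≤ 1 := hsm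
            _ ≤ s₀⁻¹ * s₀⁻¹ * (s * s) := by
                nlinarith [mul_le_mul_of_nonneg_left hss
                  (mul_nonneg hi.le hi.le)]
        have hC1 : 2 * m * (s₀⁻¹ * s₀⁻¹) ≤ C := by
          rw [hC]
          have : 0 ≤ 2 * m * F := by positivity
          nlinarith
        calc 2 * m * a ≤ 2 * m * (s₀⁻¹ * s₀⁻¹) :=
              mul_le_mul_of_nonneg_left hbound (by linarith)
          _ ≤ C := hC1
          _ ≤ C * X := le_mul_of_one_le_right hC0.le hX.le
      · -- large s
        have h6 : a ≤ F * X := hbig h1.le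
        have hC2 : 2 * m * F ≤ C := by
          rw [hC]
          have : 0 ≤ 2 * m * (s₀⁻¹ * s₀⁻¹) := by positivity
          nlinarith
        calc 2 * m * a ≤ 2 * m * (F * X) :=
              mul_le_mul_of_nonneg_left h6 (by linarith)
          _ = (2 * m * F) * X := by ring
          _ ≤ C * X := mul_le_mul_of_nonneg_right hC2 hX0.le
    -- finish
    have hmas : 0 ≤ m * a * s := by positivity
    have hXi : 0 < X⁻¹ := by positivity
    have f2 : 2 * m * a * s ≤ C * X * s := mul_le_mul_of_nonneg_right h2 hs.le
    have h21 : m * a * s * (X⁻¹ * X⁻¹) ≤ m * a * s * X⁻¹ :=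
      mul_le_mul_of_nonneg_left
        (mul_le_of_le_one_left hXi.le (inv_le_one_of_one_le₀ hX.le)) hmas
    have h22 : 2 * m * a * s * X⁻¹ ≤ C * s := by
      have := mul_le_mul_of_nonneg_right f2 hXi.le
      have hXXe : C * X * s * X⁻¹ = C * s := by
        field_simp
      linarith [hXXe ▸ this]
    have h23 : 0 ≤ m * (m - 1) * a * (X⁻¹ * X⁻¹) := by positivity
    nlinarith [h21, h22, h23]

/-- Core algebraic inequality with the explicit constant. -/
lemma star_ineq (m s X : ℝ) (hm : 1 < m) (hs : 0 < s) (hX : 1 < X)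
    (hexp : Real.exp s = X) :
    m * s ^ (m - 1) * X⁻¹ + m * s ^ (m - 1) * (X⁻¹ * X⁻¹)
        - m * (m - 1) * s ^ (m - 2) * (X⁻¹ * X⁻¹)
      ≤ (2 * m * (((Nat.ceil m).factorial : ℝ)
          + (min 1 ((m - 1) / 4))⁻¹ * (min 1 ((m - 1) / 4))⁻¹)) * s := by
  have hm1 : (0:ℝ) < m - 1 := by linarith
  have hs₀ : 0 < min 1 ((m - 1) / 4) := lt_min one_pos (by linarith)
  have hF : (0:ℝ) < ((Nat.ceil m).factorial : ℝ) := by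
    exact_mod_cast (Nat.ceil m).factorial_pos
  refine star_core m s X _ _ _ _ hm hs hX hF hs₀ (min_le_left _ _)
    (min_le_right _ _) rfl rfl ?_ ?_
  · intro h1
    rw [← hexp]
    calc Real.exp s ≤ Real.exp 1 := Real.exp_le_exp.2 h1.le
      _ < 3 := by have := Real.exp_one_lt_d9; linarith
  · intro h1
    have h3 : s ^ (m - 2) ≤ s ^ (Nat.ceil m : ℝ) :=
      Real.rpow_le_rpow_of_exponent_le h1 (by linarith [Nat.le_ceil m])
    have h5 := Real.pow_div_factorial_le_exp (x := s) hs.le (Nat.ceil m)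
    rw [div_le_iff₀ (by positivity : (0:ℝ) < ((Nat.ceil m).factorial : ℝ))] at h5
    rw [← hexp]
    calc s ^ (m - 2) ≤ s ^ (Nat.ceil m : ℝ) := h3
      _ = s ^ (Nat.ceil m) := Real.rpow_natCast s _
      _ ≤ ((Nat.ceil m).factorial : ℝ) * Real.exp s := by linarith

/-- Counterexample to `L^∞` regularization for the Dirichlet
problem with weights `ρ_ν = ρ_μ = e^{-x}` on `(0,∞)`: for a suitable `B > 0` the
function `v(x,t) = log(x+1)(1 + B⁻¹(m-1)t)^{-1/(m-1)}` is a pointwise subsolution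
of `u_t = e^x (e^{-x}(u^m)_x)_x`. -/
theorem stmt_9 (m : ℝ) (hm : 1 < m) :
    ∃ B : ℝ, 0 < B ∧ ∀ x : ℝ, 0 < x → ∀ t : ℝ, 0 < t →
      deriv (fun τ => subSol m B x τ) t ≤
        Real.exp x *
          deriv (fun y => Real.exp (-y) * deriv (fun z => (subSol m B z t) ^ m) y)
            x := by
  have hm1 : (0:ℝ) < m - 1 := by linarith
  set C : ℝ := 2 * m * (((Nat.ceil m).factorial : ℝ)
      + (min 1 ((m - 1) / 4))⁻¹ * (min 1 ((m - 1) / 4))⁻¹) with hCdef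
  have hs₀ : 0 < min 1 ((m - 1) / 4) := lt_min one_pos (by linarith)
  have hF : (0:ℝ) < ((Nat.ceil m).factorial : ℝ) := by
    exact_mod_cast (Nat.ceil m).factorial_pos
  have hC0 : 0 < C := by
    rw [hCdef]
    have h1 : 0 < ((Nat.ceil m).factorial : ℝ)
        + (min 1 ((m - 1) / 4))⁻¹ * (min 1 ((m - 1) / 4))⁻¹ := by positivity
    exact mul_pos (by linarith) h1
  refine ⟨C⁻¹, inv_pos.2 hC0, ?_⟩
  intro x hx t ht
  have hx1 : (0:ℝ) < x + 1 := by linarith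
  have hx1' : (1:ℝ) < x + 1 := by linarith
  have hL : 0 < Real.log (x + 1) := Real.log_pos hx1'
  have hc : 0 < 1 + C * (m - 1) * t := by nlinarith [mul_pos (mul_pos hC0 hm1) ht]
  set c : ℝ := 1 + C * (m - 1) * t with hcdef
  set e : ℝ := -(m - 1)⁻¹ with hedef
  -- time derivative
  have hLHS : deriv (fun τ => subSol m C⁻¹ x τ) t
      = -C * Real.log (x + 1) * c ^ (e - 1) := by
    have hfun : (fun τ => subSol m C⁻¹ x τ)
        = fun τ => Real.log (x + 1) * (1 + C * (m - 1) * τ) ^ e := by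
      funext τ; simp [subSol, inv_inv, hedef]
    have h1 : HasDerivAt (fun τ : ℝ => 1 + C * (m - 1) * τ) (C * (m - 1)) t := by
      simpa using ((hasDerivAt_id t).const_mul (C * (m - 1))).const_add 1
    have h2 := (h1.rpow_const (p := e) (Or.inl hc.ne')).const_mul
      (Real.log (x + 1))
    rw [hfun, h2.deriv, hedef]
    have hne : m - 1 ≠ 0 := hm1.ne'
    field_simp
    ring
  -- inner spatial derivative
  have hD : ∀ y : ℝ, 0 < y → deriv (fun z => (subSol m C⁻¹ z t) ^ m) y
      = m * (Real.log (y + 1)) ^ (m - 1) * (y + 1)⁻¹ * c ^ (e * m) := by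
    intro y hy
    have hy1 : (0:ℝ) < y + 1 := by linarith
    have heq : (fun z => (subSol m C⁻¹ z t) ^ m)
        =ᶠ[nhds y] fun z => (Real.log (z + 1)) ^ m * c ^ (e * m) := by
      filter_upwards [Ioi_mem_nhds hy] with z hz
      have hz1 : (1:ℝ) < z + 1 := by
        have : (0:ℝ) < z := hz
        linarith
      have hLz : 0 ≤ Real.log (z + 1) := (Real.log_pos hz1).le
      simp only [subSol, inv_inv, ← hedef, ← hcdef]
      rw [Real.mul_rpow hLz (Real.rpow_nonneg hc.le _), ← Real.rpow_mul hc.le]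
    rw [heq.deriv_eq]
    have h3 : HasDerivAt (fun z : ℝ => Real.log (z + 1)) ((y + 1)⁻¹) y := by
      have := ((hasDerivAt_id y).add_const 1).log hy1.ne'
      simpa using this
    have h4 := (h3.rpow_const (p := m) (Or.inr hm.le)).mul_const (c ^ (e * m))
    rw [h4.deriv]
    ring
  -- outer spatial derivative
  have hOuter : deriv (fun y => Real.exp (-y) *
        deriv (fun z => (subSol m C⁻¹ z t) ^ m) y) x
      = Real.exp (-x) * ((m * ((m - 1) * (Real.log (x + 1)) ^ (m - 1 - 1)
            * (x + 1)⁻¹) * (x + 1)⁻¹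
          + m * (Real.log (x + 1)) ^ (m - 1) * (-(1 / (x + 1) ^ 2)))
            * c ^ (e * m))
        + (-Real.exp (-x)) * (m * (Real.log (x + 1)) ^ (m - 1) * (x + 1)⁻¹
            * c ^ (e * m)) := by
    have heq : (fun y => Real.exp (-y) *
          deriv (fun z => (subSol m C⁻¹ z t) ^ m) y) =ᶠ[nhds x]
        fun y => Real.exp (-y) *
          (m * (Real.log (y + 1)) ^ (m - 1) * (y + 1)⁻¹ * c ^ (e * m)) := by
      filter_upwards [Ioi_mem_nhds hx] with y hy
      rw [hD y hy]
    rw [heq.deriv_eq]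
    have hexp : HasDerivAt (fun y : ℝ => Real.exp (-y)) (-Real.exp (-x)) x := by
      simpa using ((hasDerivAt_id x).neg.exp)
    have h3 : HasDerivAt (fun y : ℝ => Real.log (y + 1)) ((x + 1)⁻¹) x := by
      have := ((hasDerivAt_id x).add_const 1).log hx1.ne'
      simpa using this
    have h5 := (h3.rpow_const (p := m - 1) (Or.inl hL.ne')).const_mul m
    have h6 : HasDerivAt (fun y : ℝ => (y + 1)⁻¹) (-1 / (x + 1) ^ 2) x := by
      have := ((hasDerivAt_id x).add_const 1).inv hx1.ne'
      simpa [Pi.inv_def] using this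
    have h7 := ((h5.mul h6).mul_const (c ^ (e * m)))
    have h8 := hexp.mul h7
    refine h8.deriv.trans ?_
    simp only [Pi.mul_apply]
    ring
  rw [hLHS, hOuter]
  -- simplify exp x * exp (-x) and the exponent
  have hem : e * m = e - 1 := by
    rw [hedef]; field_simp; ring
  have hK : 0 < c ^ (e - 1) := Real.rpow_pos_of_pos hc _
  have hm2 : m - 1 - 1 = m - 2 := by ring
  rw [hem, hm2, Real.exp_neg]
  have hE : Real.exp x ≠ 0 := (Real.exp_pos x).ne'
  -- the core inequality
  have hXlog : Real.exp (Real.log (x + 1)) = x + 1 := Real.exp_log hx1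
  have main := star_ineq m (Real.log (x + 1)) (x + 1) hm hL hx1' hXlog
  rw [← hCdef] at main
  set s : ℝ := Real.log (x + 1)
  set X : ℝ := x + 1
  set K : ℝ := c ^ (e - 1) with hKdef
  have hXne : X ≠ 0 := by positivity
  have hstep : (-C * s) * K ≤ (m * ((m - 1) * s ^ (m - 2) * X⁻¹) * X⁻¹
      + m * s ^ (m - 1) * (-(1 / X ^ 2)) - m * s ^ (m - 1) * X⁻¹) * K := by
    apply mul_le_mul_of_nonneg_right _ hK.le
    have h1x2 : (1 / X ^ 2) = X⁻¹ * X⁻¹ := by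
      rw [one_div, sq, mul_inv]
    rw [h1x2]
    nlinarith [main]
  refine le_trans hstep (le_of_eq ?_)
  field_simp
  ring
end

section
/- Let m > 1. There exists a constant B > 0 such that the function v(x,t) = log(x²+2) · (1 + B^{-1}(m-1)t)^{-1/(m-1)}, defined for x ∈ ℝ and t > 0, satisfies, for every x ∈ ℝ with x ≠ 0 and every t > 0, the pointwise subsolution inequality ∂_t v(x,t) ≤ e^{|x|} · d/dx( e^{-|x|} · d/dx( v(x,t)^m ) ), where the x-derivatives on the right-hand side are taken of the function x ↦ e^{-|x|}·d/dx((v(x,t))^m) at the point x. -/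
open Real

lemma aux_log_le_rpow_div {y ε : ℝ} (hy : 0 < y) (hε : 0 < ε) :
    Real.log y ≤ y ^ ε / ε := by
  rw [le_div_iff₀ hε, mul_comm]
  calc ε * Real.log y = Real.log (y ^ ε) := (Real.log_rpow hy ε).symm
    _ ≤ y ^ ε - 1 := Real.log_le_sub_one_of_pos (Real.rpow_pos_of_pos hy ε)
    _ ≤ y ^ ε := by linarith

lemma aux_core (m : ℝ) (hm : 1 < m) (s y L q : ℝ) (hs : 0 ≤ s)
    (hy : y = s ^ 2 + 2) (hL : L = Real.log y) (hq : 0 < q) :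
    L * (-(Real.log 2 / (4 * m * (2 * (m - 1)) ^ (m - 1)))⁻¹) * q ≤
      ((2 * y - 2 * s * (2 * s)) / y ^ 2 * m * L ^ (m - 1)
        + 2 * s / y * m * (2 * s / y * (m - 1) * L ^ (m - 1 - 1))) * q
      - 2 * s / y * m * L ^ (m - 1) * q := by
  have hm1 : 0 < m - 1 := by linarith
  have hm0 : 0 < m := by linarith
  have hy0 : 0 < y := by nlinarith
  have hy2 : (2 : ℝ) ≤ y := by nlinarith
  have hL2 : Real.log 2 ≤ L := by rw [hL]; exact Real.log_le_log (by norm_num) hy2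
  have hlog2 : 0 < Real.log 2 := Real.log_pos (by norm_num)
  have hL0 : 0 < L := lt_of_lt_of_le hlog2 hL2
  have hr0 : 0 < Real.sqrt y := Real.sqrt_pos.2 hy0
  have hrr : Real.sqrt y * Real.sqrt y = y := Real.mul_self_sqrt hy0.le
  have hsr : s ≤ Real.sqrt y := (Real.le_sqrt hs hy0.le).2 (by nlinarith)
  have h1r : 1 ≤ Real.sqrt y := by
    nlinarith [Real.sq_sqrt hy0.le, Real.sqrt_nonneg y]
  -- step 1 : the difference bound
  have hdiff : 2 * s / y - (2 * y - 2 * s * (2 * s)) / y ^ 2 ≤ 4 / Real.sqrt y := by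
    have e1 : 2 * s / y - (2 * y - 2 * s * (2 * s)) / y ^ 2
        = (2 * s * y - 2 * y + 4 * s ^ 2) / y ^ 2 := by
      field_simp; ring
    rw [e1, div_le_div_iff₀ (by positivity) hr0]
    have hs2 : s ^ 2 ≤ y := by nlinarith
    have hry : Real.sqrt y ≤ y := by nlinarith
    nlinarith [mul_le_mul_of_nonneg_right hsr (mul_pos hy0 hr0).le,
      mul_le_mul_of_nonneg_right hry hy0.le, mul_nonneg hs hy0.le,
      mul_le_mul_of_nonneg_right hs2 hr0.le]
  -- step 2 : the rpow bound on L^(m-1)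
  have hβ0 : (0:ℝ) < (2*(m-1))⁻¹ := by positivity
  have hLpow : L ^ (m - 1) ≤ Real.sqrt y * (2 * (m - 1)) ^ (m - 1) := by
    have hlog : L ≤ y ^ (2*(m-1))⁻¹ / (2*(m-1))⁻¹ := by
      rw [hL]; exact aux_log_le_rpow_div hy0 hβ0
    calc L ^ (m - 1) ≤ (y ^ (2*(m-1))⁻¹ / (2*(m-1))⁻¹) ^ (m - 1) :=
          Real.rpow_le_rpow hL0.le hlog hm1.le
      _ = (y ^ (2*(m-1))⁻¹) ^ (m-1) / ((2*(m-1))⁻¹) ^ (m-1) :=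
          Real.div_rpow (Real.rpow_nonneg hy0.le _) hβ0.le (m-1)
      _ = Real.sqrt y * (2 * (m - 1)) ^ (m - 1) := by
          rw [← Real.rpow_mul hy0.le,
            show (2*(m-1))⁻¹ * (m-1) = 1/2 by field_simp,
            ← Real.sqrt_eq_rpow,
            Real.inv_rpow (by linarith : (0:ℝ) ≤ 2*(m-1)), div_inv_eq_mul]
  -- step 3 : key inequality
  have hBinv : (Real.log 2 / (4 * m * (2 * (m - 1)) ^ (m - 1)))⁻¹
      = 4 * m * (2 * (m - 1)) ^ (m - 1) / Real.log 2 := by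
    rw [inv_div]
  have hpw : (0:ℝ) < (2 * (m - 1)) ^ (m - 1) := Real.rpow_pos_of_pos (by linarith) _
  have key : m * L ^ (m-1) * (2 * s / y - (2 * y - 2 * s * (2 * s)) / y ^ 2)
      ≤ L * (4 * m * (2 * (m - 1)) ^ (m - 1) / Real.log 2) := by
    have hLp0 : (0:ℝ) ≤ L ^ (m-1) := Real.rpow_nonneg hL0.le _
    calc m * L ^ (m-1) * (2 * s / y - (2 * y - 2 * s * (2 * s)) / y ^ 2)
        ≤ m * L ^ (m-1) * (4 / Real.sqrt y) :=
          mul_le_mul_of_nonneg_left hdiff (by positivity)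
      _ ≤ m * (Real.sqrt y * (2 * (m - 1)) ^ (m - 1)) * (4 / Real.sqrt y) := by
          apply mul_le_mul_of_nonneg_right _ (by positivity)
          exact mul_le_mul_of_nonneg_left hLpow hm0.le
      _ = 4 * m * (2 * (m - 1)) ^ (m - 1) := by
          field_simp
      _ ≤ L * (4 * m * (2 * (m - 1)) ^ (m - 1) / Real.log 2) := by
          rw [mul_div_assoc', le_div_iff₀ hlog2]
          nlinarith [mul_le_mul_of_nonneg_left hL2 (by positivity : (0:ℝ) ≤ 4 * m * (2 * (m - 1)) ^ (m - 1))]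
  rw [hBinv]
  have hT : 0 ≤ 2 * s / y * m * (2 * s / y * (m - 1) * L ^ (m - 1 - 1)) := by
    have : (0:ℝ) ≤ L ^ (m-1-1) := Real.rpow_nonneg hL0.le _
    positivity
  nlinarith [mul_le_mul_of_nonneg_right key hq.le, mul_le_mul_of_nonneg_right hT hq.le]

/-- The family of functions `v_B(x,t) = log(x²+2) · (1 + B⁻¹(m-1)t)^{-1/(m-1)}`. -/
noncomputable def subSolNeu (m B x t : ℝ) : ℝ :=
  Real.log (x ^ 2 + 2) * (1 + B⁻¹ * (m - 1) * t) ^ (-(m - 1)⁻¹)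

/-- Counterexample to `L^∞` regularization for the Neumann
problem with weights `ρ_ν = ρ_μ = e^{-|x|}` on `ℝ`: for a suitable `B > 0` the
function `v(x,t) = log(x²+2)(1 + B⁻¹(m-1)t)^{-1/(m-1)}` satisfies, away from
`x = 0`, the pointwise subsolution inequality for
`u_t = e^{|x|}(e^{-|x|}(u^m)_x)_x`. -/
theorem stmt_11 (m : ℝ) (hm : 1 < m) :
    ∃ B : ℝ, 0 < B ∧ ∀ x : ℝ, x ≠ 0 → ∀ t : ℝ, 0 < t →
      deriv (fun τ => subSolNeu m B x τ) t ≤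
        Real.exp |x| *
          deriv
            (fun y => Real.exp (-|y|) * deriv (fun z => (subSolNeu m B z t) ^ m) y)
            x := by
  have hm1 : 0 < m - 1 := by linarith
  have hlog2 : 0 < Real.log 2 := Real.log_pos (by norm_num)
  have hpw : (0:ℝ) < (2 * (m - 1)) ^ (m - 1) := Real.rpow_pos_of_pos (by linarith) _
  set B : ℝ := Real.log 2 / (4 * m * (2 * (m - 1)) ^ (m - 1)) with hBdef
  have hB : 0 < B := by
    apply div_pos hlog2
    positivity
  refine ⟨B, hB, ?_⟩
  intro x hx t ht
  have hbt : 0 < 1 + B⁻¹ * (m - 1) * t := by positivity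
  -- positivity of the logs
  have hlogpos : ∀ z : ℝ, 0 < Real.log (z ^ 2 + 2) := fun z =>
    Real.log_pos (by nlinarith [sq_nonneg z])
  -- derivative of the base in t
  have hLHS : deriv (fun τ => subSolNeu m B x τ)  t
      = Real.log (x ^ 2 + 2) *
          (B⁻¹ * (m - 1) * (-(m - 1)⁻¹) * (1 + B⁻¹ * (m - 1) * t) ^ (-(m - 1)⁻¹ - 1)) := by
    have h1 : HasDerivAt (fun τ : ℝ => 1 + B⁻¹ * (m - 1) * τ) (B⁻¹ * (m - 1)) t := by
      simpa using ((hasDerivAt_id t).const_mul (B⁻¹ * (m - 1))).const_add 1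
    have h2 := h1.rpow_const (p := -(m - 1)⁻¹) (Or.inl hbt.ne')
    exact (h2.const_mul (Real.log (x ^ 2 + 2))).deriv
  -- the inner x-derivative, as an explicit function
  have hf : ∀ y : ℝ, HasDerivAt (fun z : ℝ => Real.log (z ^ 2 + 2))
      (2 * y / (y ^ 2 + 2)) y := by
    intro y
    have h0 : HasDerivAt (fun z : ℝ => z ^ 2 + 2) (2 * y) y := by
      simpa [mul_comm] using (hasDerivAt_pow 2 y).add_const 2
    have := h0.log (by positivity)
    simpa using this
  set G : ℝ := (1 + B⁻¹ * (m - 1) * t) ^ (-(m - 1)⁻¹) with hGdef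
  have hG0 : 0 < G := Real.rpow_pos_of_pos hbt _
  set W : ℝ → ℝ := fun y =>
    2 * y / (y ^ 2 + 2) * m * Real.log (y ^ 2 + 2) ^ (m - 1) * G ^ m with hWdef
  have hinner : (fun y => deriv (fun z => (subSolNeu m B z t) ^ m) y) = W := by
    funext y
    have hfun : (fun z => (subSolNeu m B z t) ^ m)
        = fun z => Real.log (z ^ 2 + 2) ^ m * G ^ m := by
      funext z
      rw [subSolNeu, Real.mul_rpow (hlogpos z).le (Real.rpow_nonneg hbt.le _)]
    rw [hfun]
    exact (((hf y).rpow_const (Or.inr hm.le)).mul_const (G ^ m)).deriv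
  -- derivative of W
  have hW : ∀ y : ℝ, HasDerivAt W
      (((2 * (y ^ 2 + 2) - 2 * y * (2 * y)) / (y ^ 2 + 2) ^ 2 * m
          * Real.log (y ^ 2 + 2) ^ (m - 1)
        + 2 * y / (y ^ 2 + 2) * m
          * (2 * y / (y ^ 2 + 2) * (m - 1) * Real.log (y ^ 2 + 2) ^ (m - 1 - 1))) * G ^ m) y := by
    intro y
    have hden : (0:ℝ) < y ^ 2 + 2 := by positivity
    have hnum : HasDerivAt (fun z : ℝ => 2 * z) 2 y := by
      simpa using (hasDerivAt_id y).const_mul 2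
    have hden' : HasDerivAt (fun z : ℝ => z ^ 2 + 2) (2 * y) y := by
      simpa [mul_comm] using (hasDerivAt_pow 2 y).add_const 2
    have hA : HasDerivAt (fun z : ℝ => 2 * z / (z ^ 2 + 2))
        ((2 * (y ^ 2 + 2) - 2 * y * (2 * y)) / (y ^ 2 + 2) ^ 2) y :=
      hnum.div hden' hden.ne'
    have hC : HasDerivAt (fun z : ℝ => Real.log (z ^ 2 + 2) ^ (m - 1))
        (2 * y / (y ^ 2 + 2) * (m - 1) * Real.log (y ^ 2 + 2) ^ (m - 1 - 1)) y :=
      (hf y).rpow_const (Or.inl (hlogpos y).ne')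
    exact (((hA.mul_const m).mul hC).mul_const (G ^ m))
  -- key exponent identity
  set q : ℝ := (1 + B⁻¹ * (m - 1) * t) ^ (-(m - 1)⁻¹ - 1) with hqdef
  have hq0 : 0 < q := Real.rpow_pos_of_pos hbt _
  have hGm : G ^ m = q := by
    rw [hGdef, hqdef, ← Real.rpow_mul hbt.le]
    congr 1
    field_simp
    ring
  have hap : B⁻¹ * (m - 1) * (-(m - 1)⁻¹) = -B⁻¹ := by field_simp
  have hfun2 : (fun y => Real.exp (-|y|) * deriv (fun z => (subSolNeu m B z t) ^ m) y)
      = fun y => Real.exp (-|y|) * W y := by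
    funext y; rw [congrFun hinner y]
  rw [hLHS, hfun2]
  rcases hx.lt_or_gt with hneg | hpos
  · -- x < 0
    have hev : (fun y => Real.exp (-|y|) * W y) =ᶠ[nhds x] fun y => Real.exp y * W y := by
      filter_upwards [eventually_lt_nhds hneg] with y hy
      rw [abs_of_neg hy, neg_neg]
    rw [hev.deriv_eq]
    have hexp : HasDerivAt (fun y : ℝ => Real.exp y) (Real.exp x) x := Real.hasDerivAt_exp x
    rw [show deriv (fun y => Real.exp y * W y) x = _ from (hexp.mul (hW x)).deriv, abs_of_neg hneg]
    have hre : ∀ A C : ℝ, Real.exp (-x) * (Real.exp x * A + Real.exp x * C) = C + A := by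
      intro A C
      have hee : Real.exp (-x) * Real.exp x = 1 := by rw [← Real.exp_add]; simp
      have : Real.exp (-x) * (Real.exp x * A + Real.exp x * C)
          = (Real.exp (-x) * Real.exp x) * (C + A) := by ring
      rw [this, hee, one_mul]
    rw [hre]
    simp only [hWdef, hGm, hap]
    have hcore := aux_core m hm (-x) (x ^ 2 + 2) (Real.log (x ^ 2 + 2)) q
      (by linarith) (by ring) rfl hq0
    rw [hBdef]
    linear_combination hcore
  · -- 0 < x
    have hev : (fun y => Real.exp (-|y|) * W y) =ᶠ[nhds x] fun y => Real.exp (-y) * W y := by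
      filter_upwards [eventually_gt_nhds hpos] with y hy
      rw [abs_of_pos hy]
    rw [hev.deriv_eq]
    have hexp : HasDerivAt (fun y : ℝ => Real.exp (-y)) (Real.exp (-x) * (-1)) x := by
      simpa using ((hasDerivAt_id x).neg).exp
    rw [show deriv (fun y => Real.exp (-y) * W y) x = _ from (hexp.mul (hW x)).deriv, abs_of_pos hpos]
    have hre : ∀ A C : ℝ, Real.exp x * (Real.exp (-x) * (-1) * A + Real.exp (-x) * C) = C - A := by
      intro A C
      have hee : Real.exp x * Real.exp (-x) = 1 := by rw [← Real.exp_add]; simp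
      have : Real.exp x * (Real.exp (-x) * (-1) * A + Real.exp (-x) * C)
          = (Real.exp x * Real.exp (-x)) * (C - A) := by ring
      rw [this, hee, one_mul]
    rw [hre]
    simp only [hWdef, hGm, hap]
    have hcore := aux_core m hm x (x ^ 2 + 2) (Real.log (x ^ 2 + 2)) q hpos.le rfl rfl hq0
    rw [hBdef]
    linear_combination hcore
end

section
/- Let m ≥ 2, β > 1 and r₀ ∈ (0,1). Define r(t) = r₀ e^{-m(β+2(m-1))t} for t > 0, and û(x,t) = 2x/r(t) - 1. Then for every t > 0 and every x with r(t)/2 < x < r(t), the pointwise supersolution inequality x^{β-2} ∂_t û(x,t) ≥ d/dx( x^β · d/dx( û(x,t)^m ) ) holds, where the x-derivatives on the right-hand side are taken of the function x ↦ x^β·d/dx((û(x,t))^m) at the point x. -/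
open Real

/-- Key computation in the counterexample to uniform convergence
to the mean value for the Neumann problem on `Ω = (0,1)` with weights
`ρ_ν(x) = x^{β-2}`, `ρ_μ(x) = x^β`: with `r(t) = r₀ e^{-m(β+2(m-1))t}` and
`û(x,t) = 2x/r(t) - 1`, on the region `r(t)/2 < x < r(t)` the inequality
`x^{β-2} ∂_t û ≥ (x^β (û^m)_x)_x` holds pointwise. -/
theorem stmt_12 (m β r₀ : ℝ) (hm : 2 ≤ m) (hβ : 1 < β)
    (hr₀ : r₀ ∈ Set.Ioo (0 : ℝ) 1) :
    ∀ t : ℝ, 0 < t →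
      ∀ x : ℝ, r₀ * Real.exp (-(m * (β + 2 * (m - 1))) * t) / 2 < x →
        x < r₀ * Real.exp (-(m * (β + 2 * (m - 1))) * t) →
        x ^ (β - 2) *
            deriv
              (fun τ => 2 * x / (r₀ * Real.exp (-(m * (β + 2 * (m - 1))) * τ)) - 1)
              t ≥
          deriv
            (fun y => y ^ β *
              deriv
                (fun z =>
                  (2 * z / (r₀ * Real.exp (-(m * (β + 2 * (m - 1))) * t)) - 1) ^ m)
                y)
            x := by
  intro t ht x hx1 hx2
  set c : ℝ := m * (β + 2 * (m - 1)) with hc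
  set r : ℝ := r₀ * Real.exp (-c * t) with hrdef
  have hr0 : 0 < r₀ := hr₀.1
  have hrpos : 0 < r := mul_pos hr0 (exp_pos _)
  have hrne : r ≠ 0 := hrpos.ne'
  have hx0 : 0 < x := lt_trans (by positivity) hx1
  have hu0 : 0 < 2 * x / r - 1 := by
    rw [sub_pos, lt_div_iff₀ hrpos]; linarith
  have hu1 : 2 * x / r - 1 < 1 := by
    rw [sub_lt_iff_lt_add, div_lt_iff₀ hrpos]; linarith
  -- time derivative
  have hdt : HasDerivAt (fun τ => 2 * x / (r₀ * Real.exp (-c * τ)) - 1)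
      (2 * x * c / r) t := by
    have h1 : HasDerivAt (fun τ : ℝ => -c * τ) (-c) t := by
      simpa using (hasDerivAt_id t).const_mul (-c)
    have h2 : HasDerivAt (fun τ : ℝ => r₀ * Real.exp (-c * τ))
        (r₀ * (Real.exp (-c * t) * -c)) t := (h1.exp).const_mul r₀
    have h3 := (h2.inv hrne).const_mul (2 * x)
    have h4 := h3.sub_const 1
    have h5 : (fun τ => 2 * x / (r₀ * Real.exp (-c * τ)) - 1)
        = fun τ => 2 * x * (r₀ * Real.exp (-c * τ))⁻¹ - 1 := by
      ext τ; rw [div_eq_mul_inv]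
    rw [h5]
    refine h4.congr_deriv ?_
    rw [hrdef]
    field_simp
  rw [hdt.deriv]
  -- spatial derivative: rewrite the inner deriv on a neighborhood
  have hspace : ∀ y ∈ Set.Ioi (r / 2),
      deriv (fun z => (2 * z / r - 1) ^ m) y = m * (2 * y / r - 1) ^ (m - 1) * (2 / r) := by
    intro y hy
    have hy0 : 0 < 2 * y / r - 1 := by
      rw [sub_pos, lt_div_iff₀ hrpos]
      have := hy
      simp only [Set.mem_Ioi] at this
      linarith
    have h1 : HasDerivAt (fun z : ℝ => 2 * z / r - 1) (2 / r) y := by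
      simpa using (((hasDerivAt_id y).const_mul 2).div_const r).sub_const 1
    have h2 := h1.rpow_const (p := m) (Or.inl hy0.ne')
    rw [h2.deriv]; ring
  have hmemx : Set.Ioi (r / 2) ∈ nhds x := isOpen_Ioi.mem_nhds hx1
  have hev : (fun y => y ^ β * deriv (fun z => (2 * z / r - 1) ^ m) y)
      =ᶠ[nhds x] (fun y => y ^ β * (m * (2 * y / r - 1) ^ (m - 1) * (2 / r))) := by
    filter_upwards [hmemx] with y hy
    rw [hspace y hy]
  rw [hev.deriv_eq]
  -- compute the outer derivative
  have hF1 : HasDerivAt (fun y : ℝ => y ^ β) (β * x ^ (β - 1)) x :=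
    hasDerivAt_rpow_const (Or.inl hx0.ne')
  have h1 : HasDerivAt (fun y : ℝ => 2 * y / r - 1) (2 / r) x := by
    simpa using (((hasDerivAt_id x).const_mul 2).div_const r).sub_const 1
  have hF2 : HasDerivAt (fun y : ℝ => m * (2 * y / r - 1) ^ (m - 1) * (2 / r))
      ((2 / r * (m - 1) * (2 * x / r - 1) ^ (m - 1 - 1) * m) * (2 / r)) x :=
    ((h1.rpow_const (Or.inl hu0.ne')).const_mul m).mul_const (2 / r) |>.congr_deriv (by ring)
  have hF : HasDerivAt (fun y : ℝ => y ^ β * (m * (2 * y / r - 1) ^ (m - 1) * (2 / r))) _ x :=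
    hF1.mul hF2
  rw [hF.deriv]
  -- now a pure inequality
  have hm11 : m - 1 - 1 = m - 2 := by ring
  rw [hm11]
  set A : ℝ := (2 * x / r - 1) ^ (m - 1) with hA
  set B : ℝ := (2 * x / r - 1) ^ (m - 2) with hB
  have hA0 : 0 ≤ A := rpow_nonneg hu0.le _
  have hB0 : 0 ≤ B := rpow_nonneg hu0.le _
  have hA1 : A ≤ 1 := rpow_le_one hu0.le hu1.le (by linarith)
  have hB1 : B ≤ 1 := rpow_le_one hu0.le hu1.le (by linarith)
  set P : ℝ := x ^ (β - 1) with hP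
  have hPpos : 0 < P := rpow_pos_of_pos hx0 _
  have hxβ : x ^ β = P * x := by
    rw [hP, ← Real.rpow_add_one hx0.ne' (β - 1)]; ring_nf
  have hxβ2 : x ^ (β - 2) * x = P := by
    rw [hP, ← Real.rpow_add_one hx0.ne' (β - 2)]; ring_nf
  have key : 2 * m * β * A * r + 4 * m * (m - 1) * B * x ≤ 2 * c * r := by
    have h1 : 0 ≤ 2 * m * β * r * (1 - A) := by
      apply mul_nonneg
      · apply mul_nonneg (by nlinarith) hrpos.le
      · linarith
    have h2 : B * x ≤ x := by
      calc B * x ≤ 1 * x := mul_le_mul_of_nonneg_right hB1 hx0.le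
        _ = x := one_mul x
    have h3 : 0 ≤ 4 * m * (m - 1) * (r - B * x) := by
      apply mul_nonneg
      · nlinarith
      · linarith
    rw [hc]; nlinarith [h1, h3]
  rw [ge_iff_le]
  calc β * P * (m * A * (2 / r)) + x ^ β * (2 / r * (m - 1) * B * m * (2 / r))
      = P / r ^ 2 * (2 * m * β * A * r + 4 * m * (m - 1) * B * x) := by
        rw [hxβ]; field_simp; ring
    _ ≤ P / r ^ 2 * (2 * c * r) := by
        exact mul_le_mul_of_nonneg_left key (div_nonneg hPpos.le (by positivity))
    _ ≤ x ^ (β - 2) * (2 * x * c / r) := by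
        have : x ^ (β - 2) * (2 * x * c / r) = P / r ^ 2 * (2 * c * r) := by
          rw [← hxβ2]; field_simp
        rw [this]
end

section
/- Let m > 1, β > 1 and r₀ ∈ (0,1). Define r(t) = r₀ e^{-m(β+m-1)t} for t > 0, and ũ(x,t) = x/r(t). Then for every t > 0 and every x with 0 < x < r(t), the pointwise supersolution inequality x^{β-2} ∂_t ũ(x,t) ≥ d/dx( x^β · d/dx( ũ(x,t)^m ) ) holds; explicitly, -r'(t)/r(t)² ≥ m(β+m-1) x^{m-1}/r(t)^m for all x ∈ (0, r(t)). -/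
open Real

/-- The supersolution computation covering `1 < m < 2` in the
counterexample to uniform convergence to the mean value for the Neumann problem on
`Ω = (0,1)` with weights `ρ_ν(x) = x^{β-2}`, `ρ_μ(x) = x^β`: with
`r(t) = r₀ e^{-m(β+m-1)t}` and `ũ(x,t) = x/r(t)`, on the region `0 < x < r(t)`
one has `x^{β-2} ∂_t ũ ≥ (x^β (ũ^m)_x)_x`; explicitly,
`-r'(t)/r(t)² ≥ m(β+m-1) x^{m-1}/r(t)^m`. -/
theorem stmt_13 (m β r₀ : ℝ) (hm : 1 < m) (hβ : 1 < β)
    (hr₀ : r₀ ∈ Set.Ioo (0 : ℝ) 1) :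
    ∀ t : ℝ, 0 < t →
      ∀ x : ℝ, 0 < x → x < r₀ * Real.exp (-(m * (β + m - 1)) * t) →
        (x ^ (β - 2) *
            deriv (fun τ => x / (r₀ * Real.exp (-(m * (β + m - 1)) * τ))) t ≥
          deriv
            (fun y => y ^ β *
              deriv
                (fun z => (z / (r₀ * Real.exp (-(m * (β + m - 1)) * t))) ^ m) y)
            x) ∧
        -(deriv (fun τ => r₀ * Real.exp (-(m * (β + m - 1)) * τ)) t) /
            (r₀ * Real.exp (-(m * (β + m - 1)) * t)) ^ 2 ≥
          m * (β + m - 1) * x ^ (m - 1) /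
            (r₀ * Real.exp (-(m * (β + m - 1)) * t)) ^ m := by
  obtain ⟨hr₀0, _⟩ := hr₀
  intro t ht x hx hxr
  set c : ℝ := m * (β + m - 1) with hc
  have hc0 : 0 < c := by
    have : 0 < β + m - 1 := by linarith
    have : 0 < m := by linarith
    positivity
  set r : ℝ := r₀ * Real.exp (-c * t) with hrdef
  have hr0 : 0 < r := by positivity
  have hxrle : x ≤ r := le_of_lt hxr
  -- derivative of r(·)
  have hdr : ∀ τ : ℝ, HasDerivAt (fun τ => r₀ * Real.exp (-c * τ))
      (-c * (r₀ * Real.exp (-c * τ))) τ := by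
    intro τ
    have h1 : HasDerivAt (fun τ : ℝ => -c * τ) (-c) τ := by
      simpa using (hasDerivAt_id τ).const_mul (-c)
    have h2 := (Real.hasDerivAt_exp (-c * τ)).comp τ h1
    have h3 : HasDerivAt (fun τ => r₀ * Real.exp (-c * τ))
        (r₀ * (Real.exp (-c * τ) * -c)) τ := h2.const_mul r₀
    convert h3 using 1
    ring
  -- derivative of x / r(·)
  have hdxr : deriv (fun τ => x / (r₀ * Real.exp (-c * τ))) t = c * x / r := by
    have h : HasDerivAt (fun τ => x / (r₀ * Real.exp (-c * τ))) _ t :=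
      (hasDerivAt_const t x).div (hdr t) hr0.ne'
    rw [h.deriv]
    field_simp
    rw [hrdef]; ring
  -- key monotonicity fact
  have hkey : x ^ (m - 1) ≤ r ^ (m - 1) :=
    Real.rpow_le_rpow hx.le hxrle (by linarith)
  have hrm : r ^ m = r ^ (m - 1) * r := by
    rw [← Real.rpow_add_one hr0.ne' (m - 1)]
    norm_num
  have hrm0 : 0 < r ^ m := Real.rpow_pos_of_pos hr0 m
  constructor
  · -- the PDE inequality
    -- inner derivative
    have hg : ∀ y : ℝ, deriv (fun z => (z / r) ^ m) y
        = 1 / r * m * (y / r) ^ (m - 1) := by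
      intro y
      exact (((hasDerivAt_id y).div_const r).rpow_const (Or.inr hm.le)).deriv
    have hF : (fun y => y ^ β * deriv (fun z => (z / r) ^ m) y)
        =ᶠ[nhds x] (fun y => m / r ^ m * y ^ (β + m - 1)) := by
      filter_upwards [Ioi_mem_nhds hx] with y hy
      have hy0 : (0 : ℝ) < y := hy
      rw [hg y, Real.div_rpow hy0.le hr0.le]
      rw [show β + m - 1 = β + (m - 1) by ring, Real.rpow_add hy0, hrm]
      field_simp
    rw [hF.deriv_eq]
    have hG : deriv (fun y => m / r ^ m * y ^ (β + m - 1)) x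
        = m / r ^ m * ((β + m - 1) * x ^ (β + m - 1 - 1)) :=
      ((Real.hasDerivAt_rpow_const (p := β + m - 1) (Or.inl hx.ne')).const_mul
        (m / r ^ m)).deriv
    rw [hG, hdxr]
    have hx1 : x ^ (β - 2) * (c * x / r) = c * x ^ (β - 1) / r := by
      rw [show β - 1 = (β - 2) + 1 by ring, Real.rpow_add_one hx.ne']
      ring
    have hx2 : m / r ^ m * ((β + m - 1) * x ^ (β + m - 1 - 1))
        = c * (x ^ (β - 1) * x ^ (m - 1)) / r ^ m := by
      rw [← Real.rpow_add hx, show β - 1 + (m - 1) = β + m - 1 - 1 by ring, hc]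
      ring
    rw [ge_iff_le, hx1, hx2, div_le_div_iff₀ hrm0 hr0]
    have hxb : 0 < x ^ (β - 1) := Real.rpow_pos_of_pos hx _
    calc c * (x ^ (β - 1) * x ^ (m - 1)) * r
        ≤ c * (x ^ (β - 1) * r ^ (m - 1)) * r := by
          have hxm : (0:ℝ) ≤ x ^ (m - 1) := (Real.rpow_pos_of_pos hx _).le
          gcongr
      _ = c * x ^ (β - 1) * r ^ m := by rw [hrm]; ring
  · -- the explicit inequality
    rw [(hdr t).deriv, ge_iff_le]
    have hL : -(-c * r) / r ^ 2 = c / r := by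
      field_simp
    rw [hL, div_le_div_iff₀ hrm0 hr0]
    calc c * x ^ (m - 1) * r ≤ c * r ^ (m - 1) * r := by
          have hxm : (0:ℝ) ≤ x ^ (m - 1) := (Real.rpow_pos_of_pos hx _).le
          gcongr
      _ = c * r ^ m := by rw [hrm]; ring
end
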